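/- arXiv:1009.5626 — 3 statements merged into one kernel-verified Lean document; each statement's English description precedes it below -/
import Mathlib

section
/- Let a, b, c, d, e, f be nonnegative reals such that the weighted 6-cycle G₁ with these lengths is realizable, and set μ₁ = 2·max{a,e,f} and μ₂ = 2·max{b,c,d}. Then for α ≥ 0 there exist points p₁, …, p₆ ∈ ℝ² with dist(p₁,p₆)=a, dist(p₁,p₂)=b, dist(p₂,p₃)=c, dist(p₃,p₄)=d, dist(p₄,p₅)=e, dist(p₅,p₆)=f and dist(p₁,p₄)=α if and only if α lies in [max{0, μ₁ − (a+e+f)}, a+e+f] ∩ [max{0, μ₂ − (b+c+d)}, b+c+d]. -/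
lemma dist_coord (A B : EuclideanSpace ℝ (Fin 2)) :
    dist A B = Real.sqrt ((A 0 - B 0)^2 + (A 1 - B 1)^2) := by
  rw [EuclideanSpace.dist_eq, Fin.sum_univ_two]
  simp [Real.dist_eq, sq_abs]

lemma tri (A B : EuclideanSpace ℝ (Fin 2)) (r s : ℝ) (hr : 0 ≤ r) (hs : 0 ≤ s)
    (h1 : dist A B ≤ r + s) (h2 : r ≤ dist A B + s) (h3 : s ≤ dist A B + r) :
    ∃ q : EuclideanSpace ℝ (Fin 2), dist A q = r ∧ dist q B = s := by
  set t := dist A B with htdef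
  have ht : 0 ≤ t := dist_nonneg
  rcases eq_or_lt_of_le ht with h0 | h0
  · have hrs : r = s := le_antisymm (by linarith) (by linarith)
    have hAB : A = B := by rwa [← dist_eq_zero, ← htdef, eq_comm]
    refine ⟨WithLp.toLp 2 (![A 0 + r, A 1] : Fin 2 → ℝ), ?_, ?_⟩
    · rw [dist_coord]; simp [Real.sqrt_sq hr]
    · rw [dist_coord, ← hAB]
      simp only [Matrix.cons_val_zero, Matrix.cons_val_one, Matrix.head_cons]
      rw [← hrs]
      simp [Real.sqrt_sq hr]
  · have ht0 : t ≠ 0 := ne_of_gt h0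
    set px := (t^2 + r^2 - s^2) / (2*t) with hpx
    have hh2 : 0 ≤ r^2 - px^2 := by
      rw [hpx, div_pow, sub_nonneg, div_le_iff₀ (by positivity)]
      nlinarith [mul_nonneg (mul_nonneg (by linarith : (0:ℝ) ≤ s + t - r)
        (by linarith : (0:ℝ) ≤ s + r - t)) (mul_nonneg (by linarith : (0:ℝ) ≤ t + r - s)
        (by linarith : (0:ℝ) ≤ t + r + s))]
    set h := Real.sqrt (r^2 - px^2) with hhdef
    have hsq : h^2 = r^2 - px^2 := Real.sq_sqrt hh2
    set Dx := B 0 - A 0 with hDx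
    set Dy := B 1 - A 1 with hDy
    have htsq : Dx^2 + Dy^2 = t^2 := by
      have h5 := dist_coord A B
      rw [← htdef] at h5
      have h6 : t^2 = (A 0 - B 0)^2 + (A 1 - B 1)^2 := by
        rw [h5, Real.sq_sqrt (by positivity)]
      rw [hDx, hDy]; nlinarith [h6]
    have hpxt : px * (2*t) = t^2 + r^2 - s^2 := by
      rw [hpx]; field_simp
    refine ⟨WithLp.toLp 2 (![A 0 + (px * Dx - h * Dy) / t,
              A 1 + (px * Dy + h * Dx) / t] : Fin 2 → ℝ), ?_, ?_⟩
    · rw [dist_coord]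
      simp only [Matrix.cons_val_zero, Matrix.cons_val_one, Matrix.head_cons]
      have e1 : A 0 - (A 0 + (px * Dx - h * Dy) / t) = -((px * Dx - h * Dy) / t) := by ring
      have e2 : A 1 - (A 1 + (px * Dy + h * Dx) / t) = -((px * Dy + h * Dx) / t) := by ring
      rw [e1, e2]
      have key : (-((px * Dx - h * Dy) / t))^2 + (-((px * Dy + h * Dx) / t))^2
          = (px^2 + h^2) * (Dx^2 + Dy^2) / t^2 := by
        field_simp; ring
      rw [key, htsq, hsq]
      have : (px ^ 2 + (r ^ 2 - px ^ 2)) * t ^ 2 / t ^ 2 = r ^ 2 := by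
        field_simp; ring
      rw [this, Real.sqrt_sq hr]
    · rw [dist_coord]
      simp only [Matrix.cons_val_zero, Matrix.cons_val_one, Matrix.head_cons]
      have e1 : (A 0 + (px * Dx - h * Dy) / t) - B 0 = ((px - t) * Dx - h * Dy) / t := by
        rw [hDx]; field_simp; ring
      have e2 : (A 1 + (px * Dy + h * Dx) / t) - B 1 = ((px - t) * Dy + h * Dx) / t := by
        rw [hDy]; field_simp; ring
      rw [e1, e2]
      have key : (((px - t) * Dx - h * Dy) / t)^2 + (((px - t) * Dy + h * Dx) / t)^2
          = ((px - t)^2 + h^2) * (Dx^2 + Dy^2) / t^2 := by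
        field_simp; ring
      rw [key, htsq, hsq]
      have hs2 : (px - t)^2 + (r^2 - px^2) = s^2 := by nlinarith [hpxt]
      have : ((px - t) ^ 2 + (r ^ 2 - px ^ 2)) * t ^ 2 / t ^ 2 = s ^ 2 := by
        rw [hs2]; field_simp
      rw [this, Real.sqrt_sq hs]

lemma chain (A B : EuclideanSpace ℝ (Fin 2)) (x y z : ℝ)
    (hx : 0 ≤ x) (hy : 0 ≤ y) (hz : 0 ≤ z)
    (h1 : dist A B ≤ x + y + z) (h2 : x ≤ dist A B + y + z)
    (h3 : y ≤ dist A B + x + z) (h4 : z ≤ dist A B + x + y) :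
    ∃ q1 q2 : EuclideanSpace ℝ (Fin 2),
      dist A q1 = x ∧ dist q1 q2 = y ∧ dist q2 B = z := by
  set α := dist A B with hαdef
  have hα : 0 ≤ α := dist_nonneg
  set t := max |x - y| |α - z| with htdef
  have ht1 : t ≤ α + z := by
    apply max_le
    · rw [abs_le]; constructor <;> linarith
    · rw [abs_le]; constructor <;> linarith
  have ht2 : t ≤ x + y := by
    apply max_le
    · rw [abs_le]; constructor <;> linarith
    · rw [abs_le]; constructor <;> linarith
  have ht0 : 0 ≤ t := le_trans (abs_nonneg _) (le_max_left _ _)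
  have htx : x - y ≤ t := le_trans (le_abs_self _) (le_max_left _ _)
  have hty : y - x ≤ t := by
    calc y - x ≤ |y - x| := le_abs_self _
    _ = |x - y| := abs_sub_comm _ _
    _ ≤ t := le_max_left _ _
  have htα : α - z ≤ t := le_trans (le_abs_self _) (le_max_right _ _)
  have htz : z - α ≤ t := by
    calc z - α ≤ |z - α| := le_abs_self _
    _ = |α - z| := abs_sub_comm _ _
    _ ≤ t := le_max_right _ _
  obtain ⟨q2, hq2A, hq2B⟩ := tri A B t z ht0 hz (by linarith) (by linarith) (by linarith)
  obtain ⟨q1, hq1A, hq1q2⟩ := tri A q2 x y hx hy (by rw [hq2A]; linarith)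
    (by rw [hq2A]; linarith) (by rw [hq2A]; linarith)
  exact ⟨q1, q2, hq1A, hq1q2, hq2B⟩

/-- **Realizable extension from `(G₁, l_{G₁})` to `(G₂, l_{G₂})`.**
Assume the weighted 6-cycle with edge lengths `a, b, c, d, e, f` is realizable.
With `μ₁ = 2·max{a,e,f}` and `μ₂ = 2·max{b,c,d}`, the graph `G₂` obtained by
adding the diagonal `v₁v₄` of length `α ≥ 0` is realizable in the plane if and
only if `α ∈ [max{0, μ₁−(a+e+f)}, a+e+f] ∩ [max{0, μ₂−(b+c+d)}, b+c+d]`. -/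
theorem hexagon_with_diagonal_realizable_iff (a b c d e f α : ℝ)
    (ha : 0 ≤ a) (hb : 0 ≤ b) (hc : 0 ≤ c) (hd : 0 ≤ d) (he : 0 ≤ e)
    (hf : 0 ≤ f) (hα : 0 ≤ α)
    (hG1 : ∃ p : Fin 6 → EuclideanSpace ℝ (Fin 2),
      dist (p 0) (p 5) = a ∧ dist (p 0) (p 1) = b ∧ dist (p 1) (p 2) = c ∧
      dist (p 2) (p 3) = d ∧ dist (p 3) (p 4) = e ∧ dist (p 4) (p 5) = f) :
    (∃ p : Fin 6 → EuclideanSpace ℝ (Fin 2),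
      dist (p 0) (p 5) = a ∧ dist (p 0) (p 1) = b ∧ dist (p 1) (p 2) = c ∧
      dist (p 2) (p 3) = d ∧ dist (p 3) (p 4) = e ∧ dist (p 4) (p 5) = f ∧
      dist (p 0) (p 3) = α) ↔
    (α ∈ Set.Icc (max 0 (2 * max a (max e f) - (a + e + f))) (a + e + f) ∩
      Set.Icc (max 0 (2 * max b (max c d) - (b + c + d))) (b + c + d)) := by
  constructor
  · rintro ⟨p, h05, h01, h12, h23, h34, h45, h03⟩
    have h10 : dist (p 1) (p 0) = b := (dist_comm (p 1) (p 0)).trans h01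
    have h21 : dist (p 2) (p 1) = c := (dist_comm (p 2) (p 1)).trans h12
    have h32 : dist (p 3) (p 2) = d := (dist_comm (p 3) (p 2)).trans h23
    have h43 : dist (p 4) (p 3) = e := (dist_comm (p 4) (p 3)).trans h34
    have h54 : dist (p 5) (p 4) = f := (dist_comm (p 5) (p 4)).trans h45
    have h50 : dist (p 5) (p 0) = a := (dist_comm (p 5) (p 0)).trans h05
    have h30 : dist (p 3) (p 0) = α := (dist_comm (p 3) (p 0)).trans h03
    have T1 := dist_triangle4 (p 0) (p 1) (p 2) (p 3)
    rw [h01, h12, h23, h03] at T1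
    have T2 := dist_triangle4 (p 0) (p 5) (p 4) (p 3)
    rw [h05, h54, h43, h03] at T2
    have T3 := dist_triangle4 (p 1) (p 0) (p 3) (p 2)
    rw [h10, h03, h32, h12] at T3
    have T4 := dist_triangle4 (p 0) (p 3) (p 2) (p 1)
    rw [h03, h32, h21, h01] at T4
    have T5 := dist_triangle4 (p 2) (p 1) (p 0) (p 3)
    rw [h21, h10, h03, h23] at T5
    have T6 := dist_triangle4 (p 0) (p 3) (p 4) (p 5)
    rw [h03, h34, h45, h05] at T6
    have T7 := dist_triangle4 (p 3) (p 0) (p 5) (p 4)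
    rw [h30, h05, h54, h34] at T7
    have T8 := dist_triangle4 (p 4) (p 3) (p 0) (p 5)
    rw [h43, h30, h05, h45] at T8
    constructor
    · refine Set.mem_Icc.mpr ⟨max_le hα ?_, by linarith⟩
      have := max_le (show a ≤ (a + e + f + α) / 2 by linarith)
        (max_le (show e ≤ (a + e + f + α) / 2 by linarith)
          (show f ≤ (a + e + f + α) / 2 by linarith))
      linarith
    · refine Set.mem_Icc.mpr ⟨max_le hα ?_, by linarith⟩
      have := max_le (show b ≤ (b + c + d + α) / 2 by linarith)
        (max_le (show c ≤ (b + c + d + α) / 2 by linarith)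
          (show d ≤ (b + c + d + α) / 2 by linarith))
      linarith
  · rintro ⟨hm1, hm2⟩
    obtain ⟨hl1, hu1⟩ := Set.mem_Icc.mp hm1
    obtain ⟨hl2, hu2⟩ := Set.mem_Icc.mp hm2
    have hl1' : 2 * max a (max e f) - (a + e + f) ≤ α := le_trans (le_max_right _ _) hl1
    have hl2' : 2 * max b (max c d) - (b + c + d) ≤ α := le_trans (le_max_right _ _) hl2
    have hma : a ≤ max a (max e f) := le_max_left _ _
    have hme : e ≤ max a (max e f) := le_trans (le_max_left _ _) (le_max_right _ _)
    have hmf : f ≤ max a (max e f) := le_trans (le_max_right _ _) (le_max_right _ _)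
    have hmb : b ≤ max b (max c d) := le_max_left _ _
    have hmc : c ≤ max b (max c d) := le_trans (le_max_left _ _) (le_max_right _ _)
    have hmd : d ≤ max b (max c d) := le_trans (le_max_right _ _) (le_max_right _ _)
    set A : EuclideanSpace ℝ (Fin 2) := WithLp.toLp 2 (![0, 0] : Fin 2 → ℝ) with hA
    set B : EuclideanSpace ℝ (Fin 2) := WithLp.toLp 2 (![α, 0] : Fin 2 → ℝ) with hB
    have hAB : dist A B = α := by
      rw [dist_coord, hA, hB]
      simp only [Matrix.cons_val_zero, Matrix.cons_val_one, Matrix.head_cons]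
      have : ((0:ℝ) - α)^2 + ((0:ℝ) - 0)^2 = α^2 := by ring
      rw [this, Real.sqrt_sq hα]
    have hBA : dist B A = α := (dist_comm B A).trans hAB
    obtain ⟨q1, q2, hq1, hq12, hq2⟩ := chain A B b c d hb hc hd
      (by rw [hAB]; linarith) (by rw [hAB]; linarith) (by rw [hAB]; linarith)
      (by rw [hAB]; linarith)
    obtain ⟨q4, q5, hq4, hq45, hq5⟩ := chain B A e f a he hf ha
      (by rw [hBA]; linarith) (by rw [hBA]; linarith) (by rw [hBA]; linarith)
      (by rw [hBA]; linarith)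
    refine ⟨![A, q1, q2, B, q4, q5], ?_, ?_, ?_, ?_, ?_, ?_, ?_⟩
    · show dist A q5 = a; exact (dist_comm A q5).trans hq5
    · exact hq1
    · exact hq12
    · exact hq2
    · exact hq4
    · exact hq45
    · show dist A B = α; exact hAB
end

section
/- Let a, b, c, d, e, f, α be nonnegative reals such that the weighted graph G₂ with these lengths is realizable. Then the set S = {β ≥ 0 : there exist p₁,…,p₆ ∈ ℝ² with dist(p₁,p₆)=a, dist(p₁,p₂)=b, dist(p₂,p₃)=c, dist(p₃,p₄)=d, dist(p₄,p₅)=e, dist(p₅,p₆)=f, dist(p₁,p₄)=α and dist(p₃,p₆)=β} is either a closed interval or the disjoint union of two closed intervals; that is, there exist reals m ≤ M ≤ n ≤ N such that S = [m,N], or M < n and S = [m,M] ∪ [n,N]. -/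
open Complex Set

set_option maxHeartbeats 1000000

noncomputable def Complex.abs : AbsoluteValue ℂ ℝ := NormedField.toAbsoluteValue ℂ

theorem Complex.abs_apply' (z : ℂ) : Complex.abs z = ‖z‖ := rfl

theorem Complex.abs_ofReal (x : ℝ) : Complex.abs (x : ℂ) = |x| := Complex.norm_real x

theorem Complex.sq_abs (z : ℂ) : Complex.abs z ^ 2 = Complex.normSq z := Complex.sq_norm z

theorem Complex.abs_mul_exp_arg_mul_I (x : ℂ) :
    (Complex.abs x : ℂ) * Complex.exp (Complex.arg x * Complex.I) = x :=
  Complex.norm_mul_exp_arg_mul_I x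

theorem Complex.abs_exp_ofReal_mul_I (x : ℝ) : Complex.abs (Complex.exp (x * Complex.I)) = 1 :=
  Complex.norm_exp_ofReal_mul_I x

theorem Complex.abs_conj (z : ℂ) : Complex.abs ((starRingEnd ℂ) z) = Complex.abs z :=
  Complex.norm_conj z

theorem Complex.continuous_abs : Continuous fun z : ℂ => Complex.abs z := continuous_norm

noncomputable def E2 : ℂ ≃ₗᵢ[ℝ] EuclideanSpace ℝ (Fin 2) := Complex.orthonormalBasisOneI.repr

lemma triangle_point (b c : ℝ) (hb : 0 ≤ b) (hc : 0 ≤ c) (x z : ℂ)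
    (h1 : |b - c| ≤ Complex.abs (z - x)) (h2 : Complex.abs (z - x) ≤ b + c) :
    ∃ y : ℂ, Complex.abs (y - x) = b ∧ Complex.abs (z - y) = c := by
  set r := Complex.abs (z - x) with hr
  rcases eq_or_lt_of_le (Complex.abs.nonneg (z - x)) with h0 | h0
  · -- degenerate: z = x
    have hz : z = x := sub_eq_zero.mp ((map_eq_zero Complex.abs).mp h0.symm)
    have hbc : b = c := by
      have : |b - c| ≤ 0 := by rw [hr, ← h0] at h1; exact h1
      have := abs_nonpos_iff.mp this
      linarith [sub_eq_zero.mp this]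
    refine ⟨x + b, ?_, ?_⟩
    · simp [Complex.abs_ofReal, _root_.abs_of_nonneg hb]
    · rw [hz, hbc]
      simp [Complex.abs_ofReal, _root_.abs_of_nonneg hc, sub_add_eq_sub_sub]
  · -- r > 0
    rw [← hr] at h0
    have hr0 : (r : ℂ) ≠ 0 := by exact_mod_cast ne_of_gt h0
    set p : ℝ := (b ^ 2 - c ^ 2 + r ^ 2) / (2 * r) with hp
    have hpr : 2 * r * p = b ^ 2 - c ^ 2 + r ^ 2 := by
      rw [hp]; field_simp
    have h1' : (b - c) ^ 2 ≤ r ^ 2 := by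
      nlinarith [_root_.sq_abs (b - c), mul_self_le_mul_self (abs_nonneg (b - c)) h1]
    have h2' : r ^ 2 ≤ (b + c) ^ 2 := by nlinarith [h0.le, h2]
    have hpr2 : (2 * r * p) ^ 2 = (b ^ 2 - c ^ 2 + r ^ 2) ^ 2 := by rw [hpr]
    have hp2 : p ^ 2 ≤ b ^ 2 := by
      nlinarith [hpr2, mul_nonneg (sub_nonneg.mpr h2') (sub_nonneg.mpr h1'), mul_pos h0 h0]
    set q : ℝ := Real.sqrt (b ^ 2 - p ^ 2) with hq
    have hq2 : q ^ 2 = b ^ 2 - p ^ 2 := Real.sq_sqrt (by linarith)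
    refine ⟨x + (z - x) * ((p : ℂ) + (q : ℂ) * I) / r, ?_, ?_⟩
    · have hyx : x + (z - x) * ((p : ℂ) + (q : ℂ) * I) / r - x
          = (z - x) * (((p : ℂ) + (q : ℂ) * I) / r) := by ring
      rw [hyx, map_mul, map_div₀, ← hr, Complex.abs_ofReal, abs_of_pos h0]
      have habs : Complex.abs ((p : ℂ) + (q : ℂ) * I) = b := by
        have h := Complex.sq_abs ((p : ℂ) + (q : ℂ) * I)
        rw [Complex.normSq_add_mul_I] at h
        nlinarith [Complex.abs.nonneg ((p : ℂ) + (q : ℂ) * I)]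
      rw [habs]
      field_simp
    · have hzy : z - (x + (z - x) * ((p : ℂ) + (q : ℂ) * I) / r)
          = (z - x) * ((((r - p : ℝ) : ℂ) + ((-q : ℝ) : ℂ) * I) / r) := by
        field_simp
        push_cast
        ring
      rw [hzy, map_mul, map_div₀, ← hr, Complex.abs_ofReal, abs_of_pos h0]
      have habs : Complex.abs ((((r - p) : ℝ) : ℂ) + ((-q : ℝ) : ℂ) * I) = c := by
        have h := Complex.sq_abs ((((r - p) : ℝ) : ℂ) + ((-q : ℝ) : ℂ) * I)
        rw [Complex.normSq_add_mul_I] at h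
        nlinarith [Complex.abs.nonneg ((((r - p) : ℝ) : ℂ) + ((-q : ℝ) : ℂ) * I)]
      rw [habs]
      field_simp

noncomputable def circ (s ρ : ℝ) (θ : ℝ) : ℂ := (s : ℂ) + (ρ : ℂ) * Complex.exp (θ * I)

def Ap (s u ρ r1 r2 : ℝ) : Set ℂ :=
  {z : ℂ | Complex.abs (z - (s : ℂ)) = ρ ∧ Complex.abs (z - (u : ℂ)) ∈ Set.Icc r1 r2 ∧ 0 ≤ z.im}

lemma circ_sq (s u ρ : ℝ) (t : ℝ) :
    (Complex.abs (circ s ρ t - (u : ℂ))) ^ 2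
      = (s - u) ^ 2 + ρ ^ 2 + 2 * (s - u) * ρ * Real.cos t := by
  rw [Complex.sq_abs, Complex.normSq_apply]
  have hre : (circ s ρ t - (u : ℂ)).re = s - u + ρ * Real.cos t := by
    simp [circ, Complex.exp_ofReal_mul_I_re]
    ring
  have him : (circ s ρ t - (u : ℂ)).im = ρ * Real.sin t := by
    simp [circ, Complex.exp_ofReal_mul_I_im]
  rw [hre, him]
  nlinarith [Real.sin_sq_add_cos_sq t]

lemma continuous_circ (s ρ : ℝ) : Continuous (circ s ρ) := by
  unfold circ
  continuity

lemma Ap_eq_image (s u ρ r1 r2 : ℝ) (hρ : 0 ≤ ρ) :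
    Ap s u ρ r1 r2 = circ s ρ ''
      {θ | θ ∈ Icc 0 Real.pi ∧ Complex.abs (circ s ρ θ - (u : ℂ)) ∈ Icc r1 r2} := by
  ext z
  constructor
  · rintro ⟨hzs, hzu, him⟩
    by_cases hz : z = (s : ℂ)
    · refine ⟨0, ⟨⟨le_refl 0, Real.pi_pos.le⟩, ?_⟩, ?_⟩
      · have hc : circ s ρ 0 = z := by
          have hρ0 : ρ = 0 := by rw [← hzs, hz]; simp
          simp [circ, hρ0, hz]
        rw [hc]; exact hzu
      · have hρ0 : ρ = 0 := by rw [← hzs, hz]; simp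
        simp [circ, hρ0, hz]
    · refine ⟨(z - (s : ℂ)).arg, ⟨⟨Complex.arg_nonneg_iff.mpr ?_, Complex.arg_le_pi _⟩, ?_⟩, ?_⟩
      · simp [him]
      · have hc : circ s ρ (z - (s : ℂ)).arg = z := by
          unfold circ
          rw [← hzs, Complex.abs_mul_exp_arg_mul_I (z - (s : ℂ))]
          ring
        rw [hc]; exact hzu
      · unfold circ
        rw [← hzs, Complex.abs_mul_exp_arg_mul_I (z - (s : ℂ))]
        ring
  · rintro ⟨θ, ⟨⟨h0, hπ⟩, habs⟩, rfl⟩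
    refine ⟨?_, habs, ?_⟩
    · unfold circ
      have : (s : ℂ) + (ρ : ℂ) * Complex.exp (θ * I) - (s : ℂ) = (ρ : ℂ) * Complex.exp (θ * I) := by
        ring
      rw [this, map_mul, Complex.abs_exp_ofReal_mul_I, Complex.abs_ofReal,
        _root_.abs_of_nonneg hρ, mul_one]
    · have : (circ s ρ θ).im = ρ * Real.sin θ := by
        simp [circ, Complex.exp_ofReal_mul_I_im]
      rw [this]
      exact mul_nonneg hρ (Real.sin_nonneg_of_nonneg_of_le_pi h0 hπ)

lemma Ap_compact_preconnected (s u ρ r1 r2 : ℝ) (hρ : 0 ≤ ρ) (hr1 : 0 ≤ r1) :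
    IsCompact (Ap s u ρ r1 r2) ∧ IsPreconnected (Ap s u ρ r1 r2) := by
  set P : Set ℝ :=
    {θ | θ ∈ Icc 0 Real.pi ∧ Complex.abs (circ s ρ θ - (u : ℂ)) ∈ Icc r1 r2} with hP
  have hcont : Continuous fun θ : ℝ => Complex.abs (circ s ρ θ - (u : ℂ)) :=
    Complex.continuous_abs.comp ((continuous_circ s ρ).sub continuous_const)
  have hPc : IsClosed P := by
    have : P = Icc 0 Real.pi ∩ (fun θ : ℝ => Complex.abs (circ s ρ θ - (u : ℂ))) ⁻¹' Icc r1 r2 :=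
      rfl
    rw [this]
    exact isClosed_Icc.inter (isClosed_Icc.preimage hcont)
  have hPcompact : IsCompact P :=
    isCompact_Icc.of_isClosed_subset hPc (fun θ hθ => hθ.1)
  have hPconn : IsPreconnected P := by
    have hord : P.OrdConnected := by
      constructor
      rintro θa ⟨⟨ha0, haπ⟩, ha1, ha2⟩ θb ⟨⟨hb0, hbπ⟩, hb1, hb2⟩ θ ⟨hθa, hθb⟩
      have hθ0 : 0 ≤ θ := le_trans ha0 hθa
      have hθπ : θ ≤ Real.pi := le_trans hθb hbπ
      refine ⟨⟨hθ0, hθπ⟩, ?_⟩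
      have hc1 : Real.cos θb ≤ Real.cos θ := Real.cos_le_cos_of_nonneg_of_le_pi hθ0 hbπ hθb
      have hc2 : Real.cos θ ≤ Real.cos θa := Real.cos_le_cos_of_nonneg_of_le_pi ha0 hθπ hθa
      have hNa := circ_sq s u ρ θa
      have hNb := circ_sq s u ρ θb
      have hNt := circ_sq s u ρ θ
      set x := Complex.abs (circ s ρ θ - (u : ℂ)) with hx
      set va := Complex.abs (circ s ρ θa - (u : ℂ)) with hva
      set vb := Complex.abs (circ s ρ θb - (u : ℂ)) with hvb
      have hx0 : 0 ≤ x := Complex.abs.nonneg _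
      have hva0 : 0 ≤ va := Complex.abs.nonneg _
      have hvb0 : 0 ≤ vb := Complex.abs.nonneg _
      have hr2 : 0 ≤ r2 := le_trans hva0 ha2
      have hva_lo : r1 ^ 2 ≤ va ^ 2 := by nlinarith [ha1, hva0, hr1]
      have hva_hi : va ^ 2 ≤ r2 ^ 2 := by nlinarith [ha2, hva0]
      have hvb_lo : r1 ^ 2 ≤ vb ^ 2 := by nlinarith [hb1, hvb0, hr1]
      have hvb_hi : vb ^ 2 ≤ r2 ^ 2 := by nlinarith [hb2, hvb0]
      have hsq : r1 ^ 2 ≤ x ^ 2 ∧ x ^ 2 ≤ r2 ^ 2 := by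
        rcases le_total 0 (2 * (s - u) * ρ) with hk | hk
        · have hm1 := mul_le_mul_of_nonneg_left hc1 hk
          have hm2 := mul_le_mul_of_nonneg_left hc2 hk
          exact ⟨by linarith, by linarith⟩
        · have hm1 := mul_le_mul_of_nonpos_left hc2 hk
          have hm2 := mul_le_mul_of_nonpos_left hc1 hk
          exact ⟨by linarith, by linarith⟩
      constructor
      · nlinarith [hsq.1, hx0, hr1]
      · nlinarith [hsq.2, hx0, hr2]
    exact hord.isPreconnected
  rw [Ap_eq_image s u ρ r1 r2 hρ]
  exact ⟨hPcompact.image (continuous_circ s ρ),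
    hPconn.image _ ((continuous_circ s ρ).continuousOn)⟩

lemma realize_of_constraints (a b c d e f α β : ℝ)
    (hb : 0 ≤ b) (hc : 0 ≤ c) (he : 0 ≤ e) (hf : 0 ≤ f) (hα : 0 ≤ α)
    (q2 q5 : ℂ)
    (h2α : Complex.abs (q2 - (α : ℂ)) = d)
    (h2 : Complex.abs (q2 - (0 : ℂ)) ∈ Icc |b - c| (b + c))
    (h5 : Complex.abs (q5 - (0 : ℂ)) = a)
    (h5α : Complex.abs (q5 - (α : ℂ)) ∈ Icc |e - f| (e + f))
    (hβ : Complex.abs (q2 - q5) = β) :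
    ∃ p : Fin 6 → EuclideanSpace ℝ (Fin 2),
      dist (p 0) (p 5) = a ∧ dist (p 0) (p 1) = b ∧ dist (p 1) (p 2) = c ∧
      dist (p 2) (p 3) = d ∧ dist (p 3) (p 4) = e ∧ dist (p 4) (p 5) = f ∧
      dist (p 0) (p 3) = α ∧ dist (p 2) (p 5) = β := by
  rw [sub_zero] at h2 h5
  obtain ⟨z1, hz1b, hz1c⟩ := triangle_point b c hb hc 0 q2 (by rw [sub_zero]; exact h2.1) (by rw [sub_zero]; exact h2.2)
  obtain ⟨z4, hz4e, hz4f⟩ := triangle_point e f he hf (α : ℂ) q5 h5α.1 h5α.2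
  set ζ : Fin 6 → ℂ := ![0, z1, q2, (α : ℂ), z4, q5] with hζ
  refine ⟨fun i => E2 (ζ i), ?_, ?_, ?_, ?_, ?_, ?_, ?_, ?_⟩ <;>
    rw [E2.dist_map, Complex.dist_eq]
  · show Complex.abs (0 - q5) = a
    rw [Complex.abs.map_sub, sub_zero]; exact h5
  · show Complex.abs (0 - z1) = b
    rw [Complex.abs.map_sub]; exact hz1b
  · show Complex.abs (z1 - q2) = c
    rw [Complex.abs.map_sub]; exact hz1c
  · show Complex.abs (q2 - (α : ℂ)) = d
    exact h2α
  · show Complex.abs ((α : ℂ) - z4) = e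
    rw [Complex.abs.map_sub]; exact hz4e
  · show Complex.abs (z4 - q5) = f
    rw [Complex.abs.map_sub]; exact hz4f
  · show Complex.abs (0 - (α : ℂ)) = α
    rw [Complex.abs.map_sub, sub_zero, Complex.abs_ofReal, _root_.abs_of_nonneg hα]
  · show Complex.abs (q2 - q5) = β
    exact hβ

lemma constraints_of_realization (a b c d e f α : ℝ) (hα : 0 ≤ α)
    (p : Fin 6 → EuclideanSpace ℝ (Fin 2))
    (h1 : dist (p 0) (p 5) = a) (h2 : dist (p 0) (p 1) = b) (h3 : dist (p 1) (p 2) = c)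
    (h4 : dist (p 2) (p 3) = d) (h5 : dist (p 3) (p 4) = e) (h6 : dist (p 4) (p 5) = f)
    (h7 : dist (p 0) (p 3) = α) :
    ∃ q2 q5 : ℂ,
      Complex.abs (q2 - (α : ℂ)) = d ∧ Complex.abs (q2 - (0 : ℂ)) ∈ Icc |b - c| (b + c) ∧
      Complex.abs (q5 - (0 : ℂ)) = a ∧ Complex.abs (q5 - (α : ℂ)) ∈ Icc |e - f| (e + f) ∧
      Complex.abs (q2 - q5) = dist (p 2) (p 5) := by
  classical
  set w : Fin 6 → ℂ := fun i => E2.symm (p i) - E2.symm (p 0) with hw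
  have hdist : ∀ i j, Complex.abs (w i - w j) = dist (p i) (p j) := by
    intro i j
    have h : w i - w j = E2.symm (p i) - E2.symm (p j) := by simp [hw]
    rw [h, Complex.abs_apply', ← Complex.dist_eq, E2.symm.dist_map]
  have hw0 : w 0 = 0 := by simp [hw]
  have hw3 : Complex.abs (w 3) = α := by
    have := hdist 3 0
    rw [hw0, sub_zero, dist_comm, h7] at this
    exact this
  set u0 : ℂ := if w 3 = 0 then 1 else (α : ℂ) / w 3 with hu0
  have habs_u : Complex.abs u0 = 1 := by
    by_cases h : w 3 = 0
    · simp [hu0, h]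
    · have hα0 : α ≠ 0 := by
        rw [← hw3]; simpa using h
      rw [hu0, if_neg h, map_div₀, Complex.abs_ofReal, _root_.abs_of_nonneg hα, hw3,
        div_self hα0]
  have hu3 : u0 * w 3 = (α : ℂ) := by
    by_cases h : w 3 = 0
    · have : α = 0 := by rw [← hw3, h]; simp
      rw [h, this]; simp
    · rw [hu0, if_neg h, div_mul_cancel₀ _ h]
  have habs' : ∀ i j, Complex.abs (u0 * w i - u0 * w j) = dist (p i) (p j) := by
    intro i j
    rw [← mul_sub, map_mul, habs_u, one_mul, hdist]
  refine ⟨u0 * w 2, u0 * w 5, ?_, ⟨?_, ?_⟩, ?_, ⟨?_, ?_⟩, ?_⟩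
  · rw [← hu3, habs', h4]
  · have hle := abs_dist_sub_le (p 0) (p 2) (p 1)
    rw [h2, dist_comm (p 2) (p 1), h3] at hle
    have : Complex.abs (u0 * w 2 - (0 : ℂ)) = dist (p 2) (p 0) := by
      have h0 : u0 * w 0 = 0 := by rw [hw0, mul_zero]
      rw [← h0, habs']
    rw [this, dist_comm]
    exact hle
  · have htr := dist_triangle (p 0) (p 1) (p 2)
    rw [h2, h3] at htr
    have : Complex.abs (u0 * w 2 - (0 : ℂ)) = dist (p 2) (p 0) := by
      have h0 : u0 * w 0 = 0 := by rw [hw0, mul_zero]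
      rw [← h0, habs']
    rw [this, dist_comm]
    exact htr
  · have : Complex.abs (u0 * w 5 - (0 : ℂ)) = dist (p 5) (p 0) := by
      have h0 : u0 * w 0 = 0 := by rw [hw0, mul_zero]
      rw [← h0, habs']
    rw [this, dist_comm]
    exact h1
  · have hle := abs_dist_sub_le (p 3) (p 5) (p 4)
    rw [h5, dist_comm (p 5) (p 4), h6] at hle
    have hq : Complex.abs (u0 * w 5 - (α : ℂ)) = dist (p 5) (p 3) := by rw [← hu3, habs']
    rw [hq, dist_comm]
    exact hle
  · have htr := dist_triangle (p 3) (p 4) (p 5)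
    rw [h5, h6] at htr
    have hq : Complex.abs (u0 * w 5 - (α : ℂ)) = dist (p 5) (p 3) := by rw [← hu3, habs']
    rw [hq, dist_comm]
    exact htr
  · exact habs' 2 5

lemma final_aux {S : Set ℝ} {m1 N1 m2 N2 : ℝ} (h1 : m1 ≤ N1) (h2 : m2 ≤ N2)
    (hm : m1 ≤ m2) (hS : S = Icc m1 N1 ∪ Icc m2 N2) :
    ∃ m M n N : ℝ, m ≤ M ∧ M ≤ n ∧ n ≤ N ∧
      (S = Icc m N ∨ (M < n ∧ S = Icc m M ∪ Icc n N)) := by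
  by_cases hov : m2 ≤ N1
  · refine ⟨m1, m1, m1, max N1 N2, le_rfl, le_rfl, le_trans h1 (le_max_left _ _), Or.inl ?_⟩
    rw [hS]; ext x; simp only [Set.mem_union, Set.mem_Icc]
    constructor
    · rintro (⟨u1, u2⟩ | ⟨u1, u2⟩)
      · exact ⟨u1, le_trans u2 (le_max_left _ _)⟩
      · exact ⟨le_trans hm u1, le_trans u2 (le_max_right _ _)⟩
    · rintro ⟨u1, u2⟩
      rcases le_or_gt x N1 with h | h
      · exact Or.inl ⟨u1, h⟩
      · refine Or.inr ⟨le_trans hov h.le, ?_⟩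
        rcases le_total N1 N2 with hN | hN
        · rw [max_eq_right hN] at u2; exact u2
        · rw [max_eq_left hN] at u2; exact absurd u2 (not_le.mpr h)
  · push_neg at hov
    exact ⟨m1, N1, m2, N2, h1, hov.le, h2, Or.inr ⟨hov, hS⟩⟩

lemma final_cases {S : Set ℝ} {m1 N1 m2 N2 : ℝ} (h1 : m1 ≤ N1) (h2 : m2 ≤ N2)
    (hS : S = Icc m1 N1 ∪ Icc m2 N2) :
    ∃ m M n N : ℝ, m ≤ M ∧ M ≤ n ∧ n ≤ N ∧
      (S = Icc m N ∨ (M < n ∧ S = Icc m M ∪ Icc n N)) := by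
  rcases le_total m1 m2 with hm | hm
  · exact final_aux h1 h2 hm hS
  · exact final_aux h2 h1 hm (by rw [hS, union_comm])

/-- **Realizable extension from `(G₂, l_{G₂})` to `(G₃, l_{G₃})`.**
Assume the weighted graph `G₂` (6-cycle with lengths `a,…,f` plus the diagonal
`v₁v₄` of length `α`) is realizable. Then the set of lengths `β ≥ 0` for the
extra diagonal `v₃v₆` keeping the configuration realizable is a closed interval
or the disjoint union of two closed intervals. -/
theorem G3_beta_set_interval_or_two_intervals (a b c d e f α : ℝ)
    (ha : 0 ≤ a) (hb : 0 ≤ b) (hc : 0 ≤ c) (hd : 0 ≤ d) (he : 0 ≤ e)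
    (hf : 0 ≤ f) (hα : 0 ≤ α)
    (hG2 : ∃ p : Fin 6 → EuclideanSpace ℝ (Fin 2),
      dist (p 0) (p 5) = a ∧ dist (p 0) (p 1) = b ∧ dist (p 1) (p 2) = c ∧
      dist (p 2) (p 3) = d ∧ dist (p 3) (p 4) = e ∧ dist (p 4) (p 5) = f ∧
      dist (p 0) (p 3) = α) :
    ∃ m M n N : ℝ, m ≤ M ∧ M ≤ n ∧ n ≤ N ∧
      ({β : ℝ | 0 ≤ β ∧ ∃ p : Fin 6 → EuclideanSpace ℝ (Fin 2),
          dist (p 0) (p 5) = a ∧ dist (p 0) (p 1) = b ∧ dist (p 1) (p 2) = c ∧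
          dist (p 2) (p 3) = d ∧ dist (p 3) (p 4) = e ∧ dist (p 4) (p 5) = f ∧
          dist (p 0) (p 3) = α ∧ dist (p 2) (p 5) = β}
        = Set.Icc m N ∨
        (M < n ∧
          {β : ℝ | 0 ≤ β ∧ ∃ p : Fin 6 → EuclideanSpace ℝ (Fin 2),
            dist (p 0) (p 5) = a ∧ dist (p 0) (p 1) = b ∧ dist (p 1) (p 2) = c ∧
            dist (p 2) (p 3) = d ∧ dist (p 3) (p 4) = e ∧ dist (p 4) (p 5) = f ∧
            dist (p 0) (p 3) = α ∧ dist (p 2) (p 5) = β}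
          = Set.Icc m M ∪ Set.Icc n N)) := by
  classical
  set S : Set ℝ := {β : ℝ | 0 ≤ β ∧ ∃ p : Fin 6 → EuclideanSpace ℝ (Fin 2),
      dist (p 0) (p 5) = a ∧ dist (p 0) (p 1) = b ∧ dist (p 1) (p 2) = c ∧
      dist (p 2) (p 3) = d ∧ dist (p 3) (p 4) = e ∧ dist (p 4) (p 5) = f ∧
      dist (p 0) (p 3) = α ∧ dist (p 2) (p 5) = β} with hSdef
  obtain ⟨p₀, hp1, hp2, hp3, hp4, hp5, hp6, hp7⟩ := hG2
  obtain ⟨q2₀, q5₀, hq1, hq2, hq3, hq4, hq5⟩ :=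
    constraints_of_realization a b c d e f α hα p₀ hp1 hp2 hp3 hp4 hp5 hp6 hp7
  have habs_conj : ∀ (t : ℝ) (z : ℂ),
      Complex.abs ((starRingEnd ℂ) z - (t : ℂ)) = Complex.abs (z - (t : ℂ)) := by
    intro t z
    calc Complex.abs ((starRingEnd ℂ) z - (t : ℂ))
        = Complex.abs ((starRingEnd ℂ) (z - (t : ℂ))) := by
          congr 1
          rw [map_sub, Complex.conj_ofReal]
      _ = Complex.abs (z - (t : ℂ)) := Complex.abs_conj _
  set A := Ap α 0 d |b - c| (b + c) with hA
  set B := Ap 0 α a |e - f| (e + f) with hB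
  set B' := (fun z : ℂ => (starRingEnd ℂ) z) '' B with hB'
  have hmemA : ∀ z : ℂ, Complex.abs (z - (α : ℂ)) = d →
      Complex.abs (z - (0 : ℂ)) ∈ Icc |b - c| (b + c) → 0 ≤ z.im → z ∈ A := by
    intro z hz1 hz2 hz3
    exact ⟨hz1, by simpa using hz2, hz3⟩
  have hmemB : ∀ z : ℂ, Complex.abs (z - (0 : ℂ)) = a →
      Complex.abs (z - (α : ℂ)) ∈ Icc |e - f| (e + f) → 0 ≤ z.im → z ∈ B := by
    intro z hz1 hz2 hz3
    exact ⟨by simpa using hz1, hz2, hz3⟩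
  have hSeq : S = (fun q : ℂ × ℂ => Complex.abs (q.1 - q.2)) '' (A ×ˢ B) ∪
      (fun q : ℂ × ℂ => Complex.abs (q.1 - q.2)) '' (A ×ˢ B') := by
    ext β
    constructor
    · rintro ⟨hβ0, p, h1, h2, h3, h4, h5, h6, h7, h8⟩
      obtain ⟨q2, q5, hc1, hc2, hc3, hc4, hc5⟩ :=
        constraints_of_realization a b c d e f α hα p h1 h2 h3 h4 h5 h6 h7
      rw [h8] at hc5
      obtain ⟨x, y, hx1, hx2, hy1, hy2, hxy, hxim⟩ :
          ∃ x y : ℂ, Complex.abs (x - (α : ℂ)) = d ∧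
            Complex.abs (x - (0 : ℂ)) ∈ Icc |b - c| (b + c) ∧
            Complex.abs (y - (0 : ℂ)) = a ∧
            Complex.abs (y - (α : ℂ)) ∈ Icc |e - f| (e + f) ∧
            Complex.abs (x - y) = β ∧ 0 ≤ x.im := by
        rcases le_total 0 q2.im with him | him
        · exact ⟨q2, q5, hc1, hc2, hc3, hc4, hc5, him⟩
        · refine ⟨(starRingEnd ℂ) q2, (starRingEnd ℂ) q5, ?_, ?_, ?_, ?_, ?_, ?_⟩
          · rw [habs_conj]; exact hc1
          · have := habs_conj 0 q2; rw [Complex.ofReal_zero] at this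
            rw [this]; exact hc2
          · have := habs_conj 0 q5; rw [Complex.ofReal_zero] at this
            rw [this]; exact hc3
          · rw [habs_conj]; exact hc4
          · rw [← map_sub, Complex.abs_conj]; exact hc5
          · simpa using neg_nonneg.mpr him
      rcases le_total 0 y.im with hyim | hyim
      · exact Or.inl ⟨(x, y), ⟨hmemA x hx1 hx2 hxim, hmemB y hy1 hy2 hyim⟩, hxy⟩
      · refine Or.inr ⟨(x, y), ⟨hmemA x hx1 hx2 hxim, ?_⟩, hxy⟩
        refine ⟨(starRingEnd ℂ) y, ?_, Complex.conj_conj y⟩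
        refine hmemB _ ?_ ?_ ?_
        · have := habs_conj 0 y; rw [Complex.ofReal_zero] at this
          rw [this]; exact hy1
        · rw [habs_conj]; exact hy2
        · simpa using neg_nonneg.mpr hyim
    · rintro (⟨⟨x, y⟩, ⟨hx, hy⟩, rfl⟩ | ⟨⟨x, y⟩, ⟨hx, hy⟩, rfl⟩)
      · obtain ⟨p, hp⟩ := realize_of_constraints a b c d e f α _ hb hc he hf hα x y
          hx.1 (by simpa using hx.2.1) (by simpa using hy.1) hy.2.1 rfl
        exact ⟨Complex.abs.nonneg _, p, hp⟩
      · obtain ⟨w, hw, rfl⟩ := hy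
        obtain ⟨p, hp⟩ := realize_of_constraints a b c d e f α _ hb hc he hf hα
          x ((starRingEnd ℂ) w) hx.1 (by simpa using hx.2.1)
          (by have := habs_conj 0 w; rw [Complex.ofReal_zero] at this
              rw [this]; simpa using hw.1)
          (by rw [habs_conj]; exact hw.2.1) rfl
        exact ⟨Complex.abs.nonneg _, p, hp⟩
  have hAcp := Ap_compact_preconnected α 0 d |b - c| (b + c) hd (abs_nonneg _)
  have hBcp := Ap_compact_preconnected 0 α a |e - f| (e + f) ha (abs_nonneg _)
  have hconj : Continuous fun z : ℂ => (starRingEnd ℂ) z := Complex.continuous_conj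
  have hB'c : IsCompact B' := hBcp.1.image hconj
  have hB'p : IsPreconnected B' := hBcp.2.image _ hconj.continuousOn
  have hf2 : Continuous fun q : ℂ × ℂ => Complex.abs (q.1 - q.2) :=
    Complex.continuous_abs.comp (continuous_fst.sub continuous_snd)
  have hAne : A.Nonempty := by
    rcases le_total 0 q2₀.im with him | him
    · exact ⟨q2₀, hmemA _ hq1 hq2 him⟩
    · refine ⟨(starRingEnd ℂ) q2₀, hmemA _ ?_ ?_ ?_⟩
      · rw [habs_conj]; exact hq1
      · have := habs_conj 0 q2₀; rw [Complex.ofReal_zero] at this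
        rw [this]; exact hq2
      · simpa using neg_nonneg.mpr him
  have hBne : B.Nonempty := by
    rcases le_total 0 q5₀.im with him | him
    · exact ⟨q5₀, hmemB _ hq3 hq4 him⟩
    · refine ⟨(starRingEnd ℂ) q5₀, hmemB _ ?_ ?_ ?_⟩
      · have := habs_conj 0 q5₀; rw [Complex.ofReal_zero] at this
        rw [this]; exact hq3
      · rw [habs_conj]; exact hq4
      · simpa using neg_nonneg.mpr him
  have hB'ne : B'.Nonempty := hBne.image _
  set I1 := (fun q : ℂ × ℂ => Complex.abs (q.1 - q.2)) '' (A ×ˢ B) with hI1def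
  set I2 := (fun q : ℂ × ℂ => Complex.abs (q.1 - q.2)) '' (A ×ˢ B') with hI2def
  have hI1conn : IsConnected I1 :=
    ⟨(hAne.prod hBne).image _, (hAcp.2.prod hBcp.2).image _ hf2.continuousOn⟩
  have hI1cp : IsCompact I1 := (hAcp.1.prod hBcp.1).image hf2
  have hI2conn : IsConnected I2 :=
    ⟨(hAne.prod hB'ne).image _, (hAcp.2.prod hB'p).image _ hf2.continuousOn⟩
  have hI2cp : IsCompact I2 := (hAcp.1.prod hB'c).image hf2
  have hI1e : I1 = Icc (sInf I1) (sSup I1) := eq_Icc_of_connected_compact hI1conn hI1cp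
  have hI2e : I2 = Icc (sInf I2) (sSup I2) := eq_Icc_of_connected_compact hI2conn hI2cp
  have h1le : sInf I1 ≤ sSup I1 := by
    have := hI1conn.nonempty
    rw [hI1e] at this
    exact nonempty_Icc.mp this
  have h2le : sInf I2 ≤ sSup I2 := by
    have := hI2conn.nonempty
    rw [hI2e] at this
    exact nonempty_Icc.mp this
  exact final_cases h1le h2le (hSeq.trans (by rw [← hI1e, ← hI2e]))
end

section
/- There exists ε₀ > 0 such that for every ε with 0 < ε < ε₀, the set {γ ≥ 0 : there exist p₁,…,p₆ ∈ ℝ² with dist(p₁,p₆)=ε, dist(p₁,p₂)=1, dist(p₂,p₃)=1, dist(p₃,p₄)=1, dist(p₄,p₅)=1, dist(p₅,p₆)=√2, dist(p₁,p₄)=1, dist(p₃,p₆)=√2 and dist(p₂,p₅)=γ} has exactly two connected components (one containing 1 and one containing √5). -/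
open Real
set_option maxHeartbeats 1000000

/-- The set of lengths `γ ≥ 0` for the edge `v₂v₅` such that `K_{3,3}` with
edge lengths `a, b, c, d, e, f, α, β, γ` on the edges
`v₁v₆, v₁v₂, v₂v₃, v₃v₄, v₄v₅, v₅v₆, v₁v₄, v₃v₆, v₂v₅` (vertex `vᵢ` is index
`i-1`) is realizable in the Euclidean plane. -/
def K33GammaSet (a b c d e f α β : ℝ) : Set ℝ :=
  {γ : ℝ | 0 ≤ γ ∧ ∃ p : Fin 6 → EuclideanSpace ℝ (Fin 2),
    dist (p 0) (p 5) = a ∧ dist (p 0) (p 1) = b ∧ dist (p 1) (p 2) = c ∧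
    dist (p 2) (p 3) = d ∧ dist (p 3) (p 4) = e ∧ dist (p 4) (p 5) = f ∧
    dist (p 0) (p 3) = α ∧ dist (p 2) (p 5) = β ∧ dist (p 1) (p 4) = γ}

set_option maxHeartbeats 1000000

noncomputable def sx (ε u : ℝ) : ℝ := (-u + Real.sqrt (u^2 + 2 - ε^2)) / 2
noncomputable def tx (ε u : ℝ) : ℝ := Real.sqrt (1 - (sx ε u)^2)
noncomputable def g2 (ε u v : ℝ) : ℝ :=
  1 + 8 * tx ε u * (sx ε u + u) * (2 * sx ε u * tx ε u + tx ε u * u - sx ε u * v)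
      / ((v - tx ε u)^2 + (sx ε u + u)^2)
noncomputable def gam (ε u v : ℝ) : ℝ := Real.sqrt (g2 ε u v)

lemma sx_id (ε u : ℝ) (h : 0 ≤ u^2 + 2 - ε^2) :
    (sx ε u)^2 + u * sx ε u = (2 - ε^2)/4 := by
  have hr : (Real.sqrt (u^2 + 2 - ε^2))^2 = u^2 + 2 - ε^2 := Real.sq_sqrt h
  unfold sx; nlinarith [hr]

/-- basic bounds on a circle point -/
lemma circ_bounds (ε u v : ℝ) (hε : 0 < ε) (hε' : ε ≤ 1/10) (huv : u^2 + v^2 = ε^2) :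
    |u| ≤ ε ∧ |v| ≤ ε := by
  constructor <;> rw [abs_le] <;> constructor <;> nlinarith [sq_nonneg u, sq_nonneg v]

lemma sx_bounds (ε u : ℝ) (hε : 0 < ε) (hε' : ε ≤ 1/10) (hu : |u| ≤ ε) :
    13/20 ≤ sx ε u ∧ sx ε u ≤ 19/25 := by
  have hu1 : -(1/10) ≤ u := by cases' abs_le.1 hu with h1 h2; linarith
  have hu2 : u ≤ 1/10 := by cases' abs_le.1 hu with h1 h2; linarith
  have hu2' : u^2 ≤ ε^2 := by nlinarith [abs_le.1 hu, abs_nonneg u, le_abs_self u, neg_abs_le u]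
  have harg1 : (199:ℝ)/100 ≤ u^2 + 2 - ε^2 := by nlinarith
  have harg2 : u^2 + 2 - ε^2 ≤ 2 := by nlinarith
  have h1 : (141:ℝ)/100 ≤ Real.sqrt (u^2 + 2 - ε^2) := by
    rw [show (141:ℝ)/100 = Real.sqrt ((141/100)^2) by rw [Real.sqrt_sq]; norm_num]
    apply Real.sqrt_le_sqrt; nlinarith
  have h2 : Real.sqrt (u^2 + 2 - ε^2) ≤ 1415/1000 := by
    rw [show (1415:ℝ)/1000 = Real.sqrt ((1415/1000)^2) by rw [Real.sqrt_sq]; norm_num]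
    apply Real.sqrt_le_sqrt; nlinarith
  unfold sx; constructor <;> nlinarith

lemma tx_sq (ε u : ℝ) (h : (sx ε u)^2 ≤ 1) : (tx ε u)^2 = 1 - (sx ε u)^2 := by
  unfold tx; rw [Real.sq_sqrt]; linarith

lemma tx_bounds (ε u : ℝ) (hε : 0 < ε) (hε' : ε ≤ 1/10) (hu : |u| ≤ ε) :
    16/25 ≤ tx ε u ∧ tx ε u ≤ 19/25 := by
  obtain ⟨hs1, hs2⟩ := sx_bounds ε u hε hε' hu
  have h1 : (4224:ℝ)/10000 ≤ 1 - (sx ε u)^2 := by nlinarith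
  have h2 : 1 - (sx ε u)^2 ≤ 5775/10000 := by nlinarith
  unfold tx
  constructor
  · rw [show (16:ℝ)/25 = Real.sqrt ((16/25)^2) by rw [Real.sqrt_sq]; norm_num]
    apply Real.sqrt_le_sqrt; nlinarith
  · rw [show (19:ℝ)/25 = Real.sqrt ((19/25)^2) by rw [Real.sqrt_sq]; norm_num]
    apply Real.sqrt_le_sqrt; nlinarith

lemma gbounds (s t u v : ℝ) (hs1 : 13/20 ≤ s) (hs2 : s ≤ 19/25)
    (ht1 : 16/25 ≤ t) (ht2 : t ≤ 19/25) (hu1 : -(1/10) ≤ u) (hu2 : u ≤ 1/10)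
    (hv1 : -(1/10) ≤ v) (hv2 : v ≤ 1/10) :
    59/100 ≤ (v - t)^2 + (s + u)^2 ∧
    2 ≤ 1 + 8 * t * (s + u) * (2*s*t + t*u - s*v) / ((v - t)^2 + (s + u)^2) ∧
    1 + 8 * t * (s + u) * (2*s*t + t*u - s*v) / ((v - t)^2 + (s + u)^2) ≤ 13 := by
  have hW : 59/100 ≤ (v - t)^2 + (s + u)^2 := by
    nlinarith [mul_nonneg (by linarith : (0:ℝ) ≤ t - v - 27/50) (by linarith : (0:ℝ) ≤ t - v + 27/50),
      mul_nonneg (by linarith : (0:ℝ) ≤ s + u - 11/20) (by linarith : (0:ℝ) ≤ s + u + 11/20)]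
  have hW0 : (0:ℝ) < (v - t)^2 + (s + u)^2 := by linarith
  have hst1 : (13/20)*(16/25) ≤ s*t := by nlinarith
  have hst2 : s*t ≤ (19/25)*(19/25) := by nlinarith
  have htu1 : -(19/250) ≤ t*u := by nlinarith
  have htu2 : t*u ≤ 19/250 := by nlinarith
  have hsv1 : -(19/250) ≤ s*v := by nlinarith
  have hsv2 : s*v ≤ 19/250 := by nlinarith
  have hN1 : 68/100 ≤ 2*s*t + t*u - s*v := by linarith
  have hN2 : 2*s*t + t*u - s*v ≤ 131/100 := by linarith
  have hsu1 : 55/100 ≤ s + u := by linarith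
  have hsu2 : s + u ≤ 86/100 := by linarith
  have hWle : (v - t)^2 + (s + u)^2 ≤ 148/100 := by
    nlinarith [mul_nonneg (by linarith : (0:ℝ) ≤ 86/100 - (t - v)) (by linarith : (0:ℝ) ≤ t - v),
      mul_nonneg (by linarith : (0:ℝ) ≤ 86/100 - (s + u)) (by linarith : (0:ℝ) ≤ s + u)]
  have hts : t * (s + u) ≤ (19/25) * (86/100) := by nlinarith
  have hts0 : (16/25) * (55/100) ≤ t * (s + u) := by nlinarith
  have hnum2 : 8 * t * (s + u) * (2*s*t + t*u - s*v) ≤ 8 * ((19/25) * (86/100)) * (131/100) := by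
    nlinarith [mul_le_mul hts hN2 (by linarith) (by norm_num : (0:ℝ) ≤ (19/25)*(86/100))]
  have hnum1 : 8 * ((16/25) * (55/100)) * (68/100) ≤ 8 * t * (s + u) * (2*s*t + t*u - s*v) := by
    nlinarith [mul_le_mul hts0 hN1 (by norm_num) (by nlinarith : (0:ℝ) ≤ t * (s+u))]
  refine ⟨hW, ?_, ?_⟩
  · have key : (1:ℝ) ≤ 8 * t * (s + u) * (2*s*t + t*u - s*v) / ((v - t)^2 + (s + u)^2) := by
      rw [le_div_iff₀ hW0]; nlinarith
    linarith
  · have key : 8 * t * (s + u) * (2*s*t + t*u - s*v) / ((v - t)^2 + (s + u)^2) ≤ 12 := by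
      rw [div_le_iff₀ hW0]; nlinarith
    linarith

/-- all key bounds for circle points -/
lemma main_bounds (ε u v : ℝ) (hε : 0 < ε) (hε' : ε ≤ 1/10) (huv : u^2 + v^2 = ε^2) :
    59/100 ≤ (v - tx ε u)^2 + (sx ε u + u)^2 ∧ 2 ≤ g2 ε u v ∧ g2 ε u v ≤ 13 := by
  obtain ⟨hu, hv⟩ := circ_bounds ε u v hε hε' huv
  obtain ⟨hs1, hs2⟩ := sx_bounds ε u hε hε' hu
  obtain ⟨ht1, ht2⟩ := tx_bounds ε u hε hε' hu
  have h := gbounds (sx ε u) (tx ε u) u v hs1 hs2 ht1 ht2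
    (by cases' abs_le.1 hu with h1 h2; linarith) (by cases' abs_le.1 hu with h1 h2; linarith)
    (by cases' abs_le.1 hv with h1 h2; linarith) (by cases' abs_le.1 hv with h1 h2; linarith)
  exact ⟨h.1, by unfold g2; exact h.2.1, by unfold g2; exact h.2.2⟩
noncomputable def pt (x y : ℝ) : EuclideanSpace ℝ (Fin 2) := !₂[x, y]

lemma dist_pt (a b c d : ℝ) : dist (pt a b) (pt c d) = Real.sqrt ((a-c)^2+(b-d)^2) := by
  rw [EuclideanSpace.dist_eq, Fin.sum_univ_two]
  simp [pt, Real.dist_eq, sq_abs]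

lemma alg1 (s t u v μ : ℝ) (h : t^2 = 1 - s^2)
    (hμ : μ * ((v-t)^2+(s+u)^2) = -2*(2*s*t+t*u-s*v)) :
    (t - (-μ*(s+u)))^2 + (0 - (-s+μ*(v-t)))^2 = 1 := by
  linear_combination h + μ * hμ

lemma alg2 (ε s u v t μ : ℝ) (huv : u^2+v^2 = ε^2) (hQ : s^2 + u*s = (2-ε^2)/4)
    (hμ : μ * ((v-t)^2+(s+u)^2) = -2*(2*s*t+t*u-s*v)) :
    (v - (-μ*(s+u)))^2 + ((s+u) - (-s+μ*(v-t)))^2 = 2 := by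
  linear_combination huv + 4*hQ + μ * hμ

lemma alg3 (s t u v μ : ℝ) (h : t^2 = 1 - s^2)
    (hμ : μ * ((v-t)^2+(s+u)^2) = -2*(2*s*t+t*u-s*v)) :
    (-t - (-μ*(s+u)))^2 + (0 - (-s+μ*(v-t)))^2 = 1 - 4*t*μ*(s+u) := by
  linear_combination h + μ * hμ

lemma realize (ε u v : ℝ) (hε : 0 < ε) (hε' : ε ≤ 1/10) (huv : u^2+v^2 = ε^2)
    (γ : ℝ) (hγ : γ = 1 ∨ γ = gam ε u v) :
    γ ∈ K33GammaSet ε 1 1 1 1 (Real.sqrt 2) 1 (Real.sqrt 2) := by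
  obtain ⟨hu, hv⟩ := circ_bounds ε u v hε hε' huv
  obtain ⟨hW, hg1, hg2'⟩ := main_bounds ε u v hε hε' huv
  obtain ⟨hs1, hs2⟩ := sx_bounds ε u hε hε' hu
  have hu2 : u^2 ≤ ε^2 := by nlinarith [sq_nonneg v]
  have hQ : (sx ε u)^2 + u * sx ε u = (2 - ε^2)/4 := sx_id ε u (by nlinarith)
  have hts : (tx ε u)^2 = 1 - (sx ε u)^2 := tx_sq ε u (by nlinarith)
  set s := sx ε u with hs
  set t := tx ε u with ht
  have hW0 : (v-t)^2+(s+u)^2 ≠ 0 := by intro h0; rw [h0] at hW; norm_num at hW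
  rcases hγ with rfl | rfl
  · refine ⟨zero_le_one, ![pt 0 s, pt (-t) 0, pt 0 (-s), pt t 0, pt 0 (-s), pt v (s+u)],
      ?_, ?_, ?_, ?_, ?_, ?_, ?_, ?_, ?_⟩
    · show dist (pt 0 s) (pt v (s+u)) = ε
      rw [dist_pt, show (0-v)^2+(s-(s+u))^2 = ε^2 by linear_combination huv, Real.sqrt_sq hε.le]
    · show dist (pt 0 s) (pt (-t) 0) = 1
      rw [dist_pt, show (0-(-t))^2+(s-0)^2 = 1 by linear_combination hts, Real.sqrt_one]
    · show dist (pt (-t) 0) (pt 0 (-s)) = 1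
      rw [dist_pt, show ((-t)-0)^2+(0-(-s))^2 = 1 by linear_combination hts, Real.sqrt_one]
    · show dist (pt 0 (-s)) (pt t 0) = 1
      rw [dist_pt, show (0-t)^2+((-s)-0)^2 = 1 by linear_combination hts, Real.sqrt_one]
    · show dist (pt t 0) (pt 0 (-s)) = 1
      rw [dist_pt, show (t-0)^2+(0-(-s))^2 = 1 by linear_combination hts, Real.sqrt_one]
    · show dist (pt 0 (-s)) (pt v (s+u)) = Real.sqrt 2
      rw [dist_pt, show (0-v)^2+((-s)-(s+u))^2 = 2 by linear_combination huv + 4*hQ]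
    · show dist (pt 0 s) (pt t 0) = 1
      rw [dist_pt, show (0-t)^2+(s-0)^2 = 1 by linear_combination hts, Real.sqrt_one]
    · show dist (pt 0 (-s)) (pt v (s+u)) = Real.sqrt 2
      rw [dist_pt, show (0-v)^2+((-s)-(s+u))^2 = 2 by linear_combination huv + 4*hQ]
    · show dist (pt (-t) 0) (pt 0 (-s)) = 1
      rw [dist_pt, show ((-t)-0)^2+(0-(-s))^2 = 1 by linear_combination hts, Real.sqrt_one]
  · set μ := -2*(2*s*t+t*u-s*v)/((v-t)^2+(s+u)^2) with hμdef
    have hμ : μ * ((v-t)^2+(s+u)^2) = -2*(2*s*t+t*u-s*v) := by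
      rw [hμdef]; field_simp
    have hgam : gam ε u v = Real.sqrt (g2 ε u v) := rfl
    refine ⟨Real.sqrt_nonneg _, ![pt 0 s, pt (-t) 0, pt 0 (-s), pt t 0,
      pt (-μ*(s+u)) (-s+μ*(v-t)), pt v (s+u)], ?_, ?_, ?_, ?_, ?_, ?_, ?_, ?_, ?_⟩
    · show dist (pt 0 s) (pt v (s+u)) = ε
      rw [dist_pt, show (0-v)^2+(s-(s+u))^2 = ε^2 by linear_combination huv, Real.sqrt_sq hε.le]
    · show dist (pt 0 s) (pt (-t) 0) = 1
      rw [dist_pt, show (0-(-t))^2+(s-0)^2 = 1 by linear_combination hts, Real.sqrt_one]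
    · show dist (pt (-t) 0) (pt 0 (-s)) = 1
      rw [dist_pt, show ((-t)-0)^2+(0-(-s))^2 = 1 by linear_combination hts, Real.sqrt_one]
    · show dist (pt 0 (-s)) (pt t 0) = 1
      rw [dist_pt, show (0-t)^2+((-s)-0)^2 = 1 by linear_combination hts, Real.sqrt_one]
    · show dist (pt t 0) (pt (-μ*(s+u)) (-s+μ*(v-t))) = 1
      rw [dist_pt, show (t-(-μ*(s+u)))^2+(0-(-s+μ*(v-t)))^2 = 1 from alg1 s t u v μ hts hμ,
        Real.sqrt_one]
    · show dist (pt (-μ*(s+u)) (-s+μ*(v-t))) (pt v (s+u)) = Real.sqrt 2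
      rw [dist_pt, show ((-μ*(s+u))-v)^2+((-s+μ*(v-t))-(s+u))^2 = 2 by
        linear_combination alg2 ε s u v t μ huv hQ hμ]
    · show dist (pt 0 s) (pt t 0) = 1
      rw [dist_pt, show (0-t)^2+(s-0)^2 = 1 by linear_combination hts, Real.sqrt_one]
    · show dist (pt 0 (-s)) (pt v (s+u)) = Real.sqrt 2
      rw [dist_pt, show (0-v)^2+((-s)-(s+u))^2 = 2 by linear_combination huv + 4*hQ]
    · show dist (pt (-t) 0) (pt (-μ*(s+u)) (-s+μ*(v-t))) = gam ε u v
      rw [dist_pt, hgam]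
      congr 1
      rw [show ((-t)-(-μ*(s+u)))^2+(0-(-s+μ*(v-t)))^2 = 1 - 4*t*μ*(s+u) from alg3 s t u v μ hts hμ]
      show _ = g2 ε u v
      unfold g2
      rw [← hs, ← ht, hμdef]
      field_simp
      ring
lemma sq_eq_one' (γ : ℝ) (h : γ^2 = 1) (h0 : 0 ≤ γ) : γ = 1 := by
  have h2 : (γ-1)*(γ+1) = 0 := by linear_combination h
  rcases mul_eq_zero.1 h2 with h3 | h3
  · linarith
  · linarith

lemma hlp1 (e : ℝ) (h1 : 0 < e) (h2 : e ≤ 1/10) (h3 : e^2 = 2) : False := by nlinarith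
lemma hlp2 (s u e : ℝ) (hs : 0 < s) (h1 : 0 < e) (h2 : e ≤ 1/10)
    (h : 4*s*(s+u) = 2 - e^2) : 0 < s + u := by nlinarith
lemma hlp4 (a b : ℝ) (hb : 0 < b) : 0 < a^2 + b^2 := by positivity

lemma algM (s t u v px py W M : ℝ) (hW : W = (v-t)^2+(s+u)^2)
    (hgx : px*W = -M*(s+u)) (hgy : (py+s)*W = M*(v-t))
    (hE1 : px^2+(py+s)^2 = 2*(t*px+s*(py+s))) :
    W*(M*(M + 2*(2*s*t+t*u-s*v))) = 0 := by
  subst hW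
  linear_combination (M*(s+u) - px*((v-t)^2+(s+u)^2) + 2*t*((v-t)^2+(s+u)^2))*hgx +
    (-((py+s)*((v-t)^2+(s+u)^2)) - M*(v-t) + 2*s*((v-t)^2+(s+u)^2))*hgy +
    ((v-t)^2+(s+u)^2)^2*hE1

lemma complete0 (ε γ t ax s cx cy fx fy px py : ℝ)
    (hε : 0 < ε) (hε' : ε ≤ 1/10) (hγ : 0 ≤ γ) (ht : 0 < t)
    (hA1 : (ax-(-t))^2+(s-0)^2 = 1) (hA2 : (ax-t)^2+(s-0)^2 = 1) (hay : 0 ≤ s)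
    (hC1 : ((-t)-cx)^2+(0-cy)^2 = 1) (hC2 : (cx-t)^2+(cy-0)^2 = 1)
    (hFA : (ax-fx)^2+(s-fy)^2 = ε^2) (hFC : (cx-fx)^2+(cy-fy)^2 = 2)
    (hED : (t-px)^2+(0-py)^2 = 1) (hEF : (px-fx)^2+(py-fy)^2 = 2)
    (hEB : ((-t)-px)^2+(0-py)^2 = γ^2) :
    γ = 1 ∨ ∃ u v, u^2+v^2 = ε^2 ∧ γ^2 = g2 ε u v := by
  have hax : ax = 0 := by
    have h4 : ax * t = 0 := by linear_combination (hA1 - hA2)/4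
    rcases mul_eq_zero.1 h4 with h | h
    · exact h
    · exact absurd h (ne_of_gt ht)
  subst hax
  have hts2 : t^2 + s^2 = 1 := by linear_combination hA2
  have hcx : cx = 0 := by
    have h4 : cx * t = 0 := by linear_combination (hC1 - hC2)/4
    rcases mul_eq_zero.1 h4 with h | h
    · exact h
    · exact absurd h (ne_of_gt ht)
  subst hcx
  have hcy2 : cy^2 = s^2 := by linear_combination hC2 - hA2
  have hs0 : 0 < s := by
    rcases eq_or_lt_of_le hay with h | h
    · exfalso
      have hcy0 : cy = 0 := by
        have h5 : cy^2 = 0 := by rw [hcy2, ← h]; ring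
        exact pow_eq_zero_iff (by norm_num) |>.1 h5
      rw [hcy0] at hFC
      rw [← h] at hFA
      exact hlp1 ε hε hε' (by linear_combination hFC - hFA)
    · exact h
  have hcy : cy = -s := by
    have hfact : (cy - s)*(cy + s) = 0 := by linear_combination hcy2
    rcases mul_eq_zero.1 hfact with h | h
    · exfalso
      have hcys : cy = s := by linarith
      rw [hcys] at hFC
      exact hlp1 ε hε hε' (by linear_combination hFC - hFA)
    · linarith
  subst hcy
  obtain ⟨u, hfy⟩ : ∃ u, fy = s + u := ⟨fy - s, by ring⟩
  subst hfy
  have huv : u^2 + fx^2 = ε^2 := by linear_combination hFA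
  have hstar : 4*s*(s+u) = 2 - ε^2 := by linear_combination hFC - hFA
  have hsu : 0 < s + u := hlp2 s u ε hs0 hε hε' hstar
  have harg : u^2 + 2 - ε^2 = (2*s+u)^2 := by linear_combination -hstar
  have hsx : sx ε u = s := by
    unfold sx
    rw [harg, Real.sqrt_sq (by linarith)]
    ring
  have htx : tx ε u = t := by
    unfold tx
    rw [hsx, show 1 - s^2 = t^2 by linarith, Real.sqrt_sq ht.le]
  have hE1 : px^2 + (py+s)^2 = 2*(t*px + s*(py+s)) := by linear_combination hED - hA2
  have hE2 : (fx-t)*px + (s+u)*(py+s) = 0 := by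
    linear_combination (hFC - hEF + hED - hA2)/2
  by_cases hg : px = 0 ∧ py = -s
  · left
    obtain ⟨h1, h2⟩ := hg
    rw [h1, h2] at hEB
    refine sq_eq_one' γ ?_ hγ
    linear_combination hA2 - hEB
  · right
    refine ⟨u, fx, huv, ?_⟩
    have hW0 : 0 < (fx-t)^2+(s+u)^2 := hlp4 (fx-t) (s+u) hsu
    have hgx : px * ((fx-t)^2+(s+u)^2)
        = -((fx-t)*(py+s) - (s+u)*px)*(s+u) := by linear_combination (fx-t)*hE2
    have hgy : (py+s) * ((fx-t)^2+(s+u)^2)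
        = ((fx-t)*(py+s) - (s+u)*px)*(fx-t) := by linear_combination (s+u)*hE2
    have hM0 : (fx-t)*(py+s) - (s+u)*px ≠ 0 := by
      intro h0
      rw [h0] at hgx hgy
      apply hg
      have hpx : px * ((fx-t)^2+(s+u)^2) = 0 := by linear_combination hgx
      have hpy : (py+s) * ((fx-t)^2+(s+u)^2) = 0 := by linear_combination hgy
      constructor
      · rcases mul_eq_zero.1 hpx with h | h
        · exact h
        · exact absurd h (ne_of_gt hW0)
      · rcases mul_eq_zero.1 hpy with h | h
        · linarith
        · exact absurd h (ne_of_gt hW0)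
    have hMkey := algM s t u fx px py ((fx-t)^2+(s+u)^2) ((fx-t)*(py+s) - (s+u)*px)
      rfl hgx hgy hE1
    have hMval : (fx-t)*(py+s) - (s+u)*px + 2*(2*s*t+t*u-s*fx) = 0 := by
      rcases mul_eq_zero.1 hMkey with h | h
      · exact absurd h (ne_of_gt hW0)
      · rcases mul_eq_zero.1 h with h' | h'
        · exact absurd h' hM0
        · exact h'
    have e1 : px^2 - 2*t*px + py^2 - s^2 = 0 := by linear_combination hED - hA2
    have hγ2 : γ^2 = 1 + 4*t*px := by linear_combination -hEB + e1 + hA2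
    have final : γ^2 * ((fx-t)^2+(s+u)^2)
        = ((fx-t)^2+(s+u)^2) + 8*t*(s+u)*(2*s*t+t*u-s*fx) := by
      linear_combination ((fx-t)^2+(s+u)^2)*hγ2 + 4*t*hgx - 4*t*(s+u)*hMval
    unfold g2
    rw [hsx, htx]
    rw [show (1:ℝ) + 8*t*(s+u)*(2*s*t+t*u-s*fx)/((fx-t)^2+(s+u)^2)
      = (((fx-t)^2+(s+u)^2) + 8*t*(s+u)*(2*s*t+t*u-s*fx))/((fx-t)^2+(s+u)^2) from by
        field_simp, eq_div_iff (ne_of_gt hW0)]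
    exact final
lemma frame (ex ey σ mx my a1 a2 b1 b2 : ℝ) (he : ex^2+ey^2 = 1) (hσ : σ^2 = 1) :
    (((a1-mx)*ex+(a2-my)*ey) - ((b1-mx)*ex+(b2-my)*ey))^2 +
    ((σ*(-(a1-mx)*ey+(a2-my)*ex)) - (σ*(-(b1-mx)*ey+(b2-my)*ex)))^2
    = (a1-b1)^2+(a2-b2)^2 := by
  linear_combination ((-(a1-b1)*ey+(a2-b2)*ex)^2) * hσ + ((a1-b1)^2+(a2-b2)^2) * he

lemma complete (ε γ : ℝ) (hε : 0 < ε) (hε' : ε ≤ 1/10) (hγ : 0 ≤ γ)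
    (x0 y0 x1 y1 x2 y2 x3 y3 x4 y4 x5 y5 : ℝ)
    (h05 : (x0-x5)^2+(y0-y5)^2 = ε^2)
    (h01 : (x0-x1)^2+(y0-y1)^2 = 1)
    (h12 : (x1-x2)^2+(y1-y2)^2 = 1)
    (h23 : (x2-x3)^2+(y2-y3)^2 = 1)
    (h34 : (x3-x4)^2+(y3-y4)^2 = 1)
    (h45 : (x4-x5)^2+(y4-y5)^2 = 2)
    (h03 : (x0-x3)^2+(y0-y3)^2 = 1)
    (h25 : (x2-x5)^2+(y2-y5)^2 = 2)
    (h14 : (x1-x4)^2+(y1-y4)^2 = γ^2) :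
    γ = 1 ∨ ∃ u v, u^2+v^2 = ε^2 ∧ γ^2 = g2 ε u v := by
  by_cases hBD : x1 = x3 ∧ y1 = y3
  · left
    obtain ⟨e1, e2⟩ := hBD
    refine sq_eq_one' γ ?_ hγ
    rw [e1, e2] at h14
    linear_combination h34 - h14
  · have hL2 : 0 < (x3-x1)^2+(y3-y1)^2 := by
      rcases not_and_or.1 hBD with h | h
      · have h1 : x3 - x1 ≠ 0 := fun hc => h (by linarith)
        positivity
      · have h1 : y3 - y1 ≠ 0 := fun hc => h (by linarith)
        positivity
    obtain ⟨L, hLdef⟩ : ∃ L, L = Real.sqrt ((x3-x1)^2+(y3-y1)^2) := ⟨_, rfl⟩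
    have hL : 0 < L := by rw [hLdef]; exact Real.sqrt_pos.2 hL2
    have hLsq : L^2 = (x3-x1)^2+(y3-y1)^2 := by rw [hLdef]; exact Real.sq_sqrt hL2.le
    obtain ⟨ex, hex⟩ : ∃ e, e = (x3-x1)/L := ⟨_, rfl⟩
    obtain ⟨ey, hey⟩ : ∃ e, e = (y3-y1)/L := ⟨_, rfl⟩
    have hx31 : x3 - x1 = L*ex := by rw [hex]; field_simp
    have hy31 : y3 - y1 = L*ey := by rw [hey]; field_simp
    have he : ex^2 + ey^2 = 1 := by
      rw [hex, hey]
      field_simp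
      linear_combination -hLsq
    obtain ⟨σ, hσdef⟩ : ∃ σ, σ = if 0 ≤ (-(x0-(x1+x3)/2)*ey + (y0-(y1+y3)/2)*ex)
      then (1:ℝ) else -1 := ⟨_, rfl⟩
    have hσ : σ^2 = 1 := by rw [hσdef]; split_ifs <;> norm_num
    have key : ∀ a1 a2 b1 b2 : ℝ,
        (((a1-(x1+x3)/2)*ex+(a2-(y1+y3)/2)*ey) - ((b1-(x1+x3)/2)*ex+(b2-(y1+y3)/2)*ey))^2 +
        ((σ*(-(a1-(x1+x3)/2)*ey+(a2-(y1+y3)/2)*ex)) -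
          (σ*(-(b1-(x1+x3)/2)*ey+(b2-(y1+y3)/2)*ex)))^2
        = (a1-b1)^2+(a2-b2)^2 :=
      fun a1 a2 b1 b2 => frame ex ey σ ((x1+x3)/2) ((y1+y3)/2) a1 a2 b1 b2 he hσ
    obtain ⟨X0, hX0⟩ : ∃ z, z = (x0-(x1+x3)/2)*ex+(y0-(y1+y3)/2)*ey := ⟨_, rfl⟩
    obtain ⟨Y0, hY0⟩ : ∃ z, z = σ*(-(x0-(x1+x3)/2)*ey+(y0-(y1+y3)/2)*ex) := ⟨_, rfl⟩
    obtain ⟨X1, hX1⟩ : ∃ z, z = (x1-(x1+x3)/2)*ex+(y1-(y1+y3)/2)*ey := ⟨_, rfl⟩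
    obtain ⟨Y1, hY1⟩ : ∃ z, z = σ*(-(x1-(x1+x3)/2)*ey+(y1-(y1+y3)/2)*ex) := ⟨_, rfl⟩
    obtain ⟨X2, hX2⟩ : ∃ z, z = (x2-(x1+x3)/2)*ex+(y2-(y1+y3)/2)*ey := ⟨_, rfl⟩
    obtain ⟨Y2, hY2⟩ : ∃ z, z = σ*(-(x2-(x1+x3)/2)*ey+(y2-(y1+y3)/2)*ex) := ⟨_, rfl⟩
    obtain ⟨X3, hX3⟩ : ∃ z, z = (x3-(x1+x3)/2)*ex+(y3-(y1+y3)/2)*ey := ⟨_, rfl⟩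
    obtain ⟨Y3, hY3⟩ : ∃ z, z = σ*(-(x3-(x1+x3)/2)*ey+(y3-(y1+y3)/2)*ex) := ⟨_, rfl⟩
    obtain ⟨X4, hX4⟩ : ∃ z, z = (x4-(x1+x3)/2)*ex+(y4-(y1+y3)/2)*ey := ⟨_, rfl⟩
    obtain ⟨Y4, hY4⟩ : ∃ z, z = σ*(-(x4-(x1+x3)/2)*ey+(y4-(y1+y3)/2)*ex) := ⟨_, rfl⟩
    obtain ⟨X5, hX5⟩ : ∃ z, z = (x5-(x1+x3)/2)*ex+(y5-(y1+y3)/2)*ey := ⟨_, rfl⟩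
    obtain ⟨Y5, hY5⟩ : ∃ z, z = σ*(-(x5-(x1+x3)/2)*ey+(y5-(y1+y3)/2)*ex) := ⟨_, rfl⟩
    have hX1val : X1 = -(L/2) := by
      rw [hX1]; linear_combination (-(ex/2))*hx31 + (-(ey/2))*hy31 + (-(L/2))*he
    have hY1val : Y1 = 0 := by
      rw [hY1]; linear_combination (σ*ey/2)*hx31 + (-(σ*ex/2))*hy31
    have hX3val : X3 = L/2 := by
      rw [hX3]; linear_combination (ex/2)*hx31 + (ey/2)*hy31 + (L/2)*he
    have hY3val : Y3 = 0 := by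
      rw [hY3]; linear_combination (-(σ*ey/2))*hx31 + (σ*ex/2)*hy31
    have hY0pos : 0 ≤ Y0 := by
      rw [hY0, hσdef]
      split_ifs with h
      · linarith [h]
      · push_neg at h
        linarith [h.le]
    have H01 : (X0-X1)^2+(Y0-Y1)^2 = 1 := by rw [hX0, hY0, hX1, hY1, key]; exact h01
    have H03 : (X0-X3)^2+(Y0-Y3)^2 = 1 := by rw [hX0, hY0, hX3, hY3, key]; exact h03
    have H12 : (X1-X2)^2+(Y1-Y2)^2 = 1 := by rw [hX1, hY1, hX2, hY2, key]; exact h12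
    have H23 : (X2-X3)^2+(Y2-Y3)^2 = 1 := by rw [hX2, hY2, hX3, hY3, key]; exact h23
    have H05 : (X0-X5)^2+(Y0-Y5)^2 = ε^2 := by rw [hX0, hY0, hX5, hY5, key]; exact h05
    have H25 : (X2-X5)^2+(Y2-Y5)^2 = 2 := by rw [hX2, hY2, hX5, hY5, key]; exact h25
    have H34 : (X3-X4)^2+(Y3-Y4)^2 = 1 := by rw [hX3, hY3, hX4, hY4, key]; exact h34
    have H45 : (X4-X5)^2+(Y4-Y5)^2 = 2 := by rw [hX4, hY4, hX5, hY5, key]; exact h45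
    have H14 : (X1-X4)^2+(Y1-Y4)^2 = γ^2 := by rw [hX1, hY1, hX4, hY4, key]; exact h14
    rw [hX1val, hY1val] at H01 H12 H14
    rw [hX3val, hY3val] at H03 H23 H34
    exact complete0 ε γ (L/2) X0 Y0 X2 Y2 X5 Y5 X4 Y4 hε hε' hγ (by linarith)
      H01 H03 hY0pos H12 H23 H05 H25 H34 H45 H14
lemma sqrt2_bounds : 141/100 ≤ Real.sqrt 2 ∧ Real.sqrt 2 ≤ 1415/1000 := by
  constructor
  · rw [show (141:ℝ)/100 = Real.sqrt ((141/100)^2) by rw [Real.sqrt_sq]; norm_num]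
    apply Real.sqrt_le_sqrt; norm_num
  · rw [show (1415:ℝ)/1000 = Real.sqrt ((1415/1000)^2) by rw [Real.sqrt_sq]; norm_num]
    apply Real.sqrt_le_sqrt; norm_num

lemma end1 (ε : ℝ) (hε : 0 < ε) (hε' : ε ≤ 1/10) : 5 ≤ g2 ε ε 0 := by
  obtain ⟨hr1, hr2'⟩ := sqrt2_bounds
  have hr2 : (Real.sqrt 2)^2 = 2 := Real.sq_sqrt (by norm_num)
  have hsx : sx ε ε = (Real.sqrt 2 - ε)/2 := by
    unfold sx; rw [show ε^2+2-ε^2 = 2 by ring]; ring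
  have hs2le : (sx ε ε)^2 ≤ 1 := by rw [hsx]; nlinarith
  have ht2 : (tx ε ε)^2 = 1 - (sx ε ε)^2 := tx_sq ε ε hs2le
  rw [hsx] at ht2
  obtain ⟨hW, _, _⟩ := main_bounds ε ε 0 hε hε' (by ring)
  rw [hsx] at hW
  have hW0 : (0:ℝ) < (0 - tx ε ε)^2 + ((Real.sqrt 2 - ε)/2 + ε)^2 := by linarith
  have hXW : 8*(tx ε ε)*((Real.sqrt 2 - ε)/2+ε)*(2*((Real.sqrt 2 - ε)/2)*(tx ε ε)+(tx ε ε)*ε-((Real.sqrt 2 - ε)/2)*0)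
      - 4*((0-(tx ε ε))^2+((Real.sqrt 2 - ε)/2+ε)^2)
      = 2*(Real.sqrt 2)*ε+2*ε^2-(Real.sqrt 2)*ε^3 := by
    linear_combination (4*(Real.sqrt 2)^2+4*(Real.sqrt 2)*ε-4)*ht2 +
      (-(Real.sqrt 2)^2+(Real.sqrt 2)*ε+2+ε^2)*hr2
  have h2e : (0:ℝ) ≤ 2 - ε^2 := by nlinarith
  have hp : 0 ≤ Real.sqrt 2 * ε * (2-ε^2) :=
    mul_nonneg (mul_nonneg (Real.sqrt_nonneg 2) hε.le) h2e
  have hpos : 0 ≤ 2*(Real.sqrt 2)*ε+2*ε^2-(Real.sqrt 2)*ε^3 := by nlinarith [hp, sq_nonneg ε]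
  unfold g2
  rw [hsx]
  have h4 : 4 ≤ 8*(tx ε ε)*((Real.sqrt 2 - ε)/2+ε)*(2*((Real.sqrt 2 - ε)/2)*(tx ε ε)+(tx ε ε)*ε-((Real.sqrt 2 - ε)/2)*0)
      / ((0-(tx ε ε))^2+((Real.sqrt 2 - ε)/2+ε)^2) := by
    rw [le_div_iff₀ hW0]; linarith
  linarith [h4]

lemma end2 (ε : ℝ) (hε : 0 < ε) (hε' : ε ≤ 1/10) : g2 ε (-ε) 0 ≤ 5 := by
  obtain ⟨hr1, hr2'⟩ := sqrt2_bounds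
  have hr2 : (Real.sqrt 2)^2 = 2 := Real.sq_sqrt (by norm_num)
  have hsx : sx ε (-ε) = (Real.sqrt 2 + ε)/2 := by
    unfold sx; rw [show (-ε)^2+2-ε^2 = 2 by ring]; ring
  have hs2le : (sx ε (-ε))^2 ≤ 1 := by rw [hsx]; nlinarith
  have ht2 : (tx ε (-ε))^2 = 1 - (sx ε (-ε))^2 := tx_sq ε (-ε) hs2le
  rw [hsx] at ht2
  obtain ⟨hW, _, _⟩ := main_bounds ε (-ε) 0 hε hε' (by ring)
  rw [hsx] at hW
  have hW0 : (0:ℝ) < (0 - tx ε (-ε))^2 + ((Real.sqrt 2 + ε)/2 + -ε)^2 := by linarith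
  have hXW : 8*(tx ε (-ε))*((Real.sqrt 2 + ε)/2+(-ε))*(2*((Real.sqrt 2 + ε)/2)*(tx ε (-ε))+(tx ε (-ε))*(-ε)-((Real.sqrt 2 + ε)/2)*0)
      - 4*((0-(tx ε (-ε)))^2+((Real.sqrt 2 + ε)/2+(-ε))^2)
      = -(2*(Real.sqrt 2)*ε)+2*ε^2+(Real.sqrt 2)*ε^3 := by
    linear_combination (4*(Real.sqrt 2)^2-4*(Real.sqrt 2)*ε-4)*ht2 +
      (-(Real.sqrt 2)^2-(Real.sqrt 2)*ε+2+ε^2)*hr2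
  have h2e : (0:ℝ) ≤ 2 - ε^2 := by nlinarith
  have hkey : 2*ε ≤ Real.sqrt 2 * (2 - ε^2) := by
    nlinarith [mul_nonneg (by linarith : (0:ℝ) ≤ Real.sqrt 2 - 141/100) h2e]
  have hneg : -(2*(Real.sqrt 2)*ε)+2*ε^2+(Real.sqrt 2)*ε^3 ≤ 0 := by
    nlinarith [mul_nonneg hε.le (by linarith : (0:ℝ) ≤ Real.sqrt 2*(2-ε^2) - 2*ε)]
  unfold g2
  rw [hsx]
  have h4 : 8*(tx ε (-ε))*((Real.sqrt 2 + ε)/2+(-ε))*(2*((Real.sqrt 2 + ε)/2)*(tx ε (-ε))+(tx ε (-ε))*(-ε)-((Real.sqrt 2 + ε)/2)*0)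
      / ((0-(tx ε (-ε)))^2+((Real.sqrt 2 + ε)/2+(-ε))^2) ≤ 4 := by
    rw [div_le_iff₀ hW0]; linarith
  linarith [h4]

lemma circle_param (ε u v : ℝ) (hε : 0 < ε) (huv : u^2+v^2 = ε^2) :
    ∃ θ, u = ε*Real.cos θ ∧ v = ε*Real.sin θ := by
  have hu2 : (u/ε)^2 + (v/ε)^2 = 1 := by field_simp; linear_combination huv
  have hc1 : -1 ≤ u/ε := by nlinarith [sq_nonneg (v/ε), sq_nonneg (u/ε+1)]
  have hc2 : u/ε ≤ 1 := by nlinarith [sq_nonneg (v/ε), sq_nonneg (u/ε-1)]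
  rcases le_or_gt 0 v with hv | hv
  · refine ⟨Real.arccos (u/ε), ?_, ?_⟩
    · rw [Real.cos_arccos hc1 hc2]; field_simp
    · rw [Real.sin_arccos]
      rw [show 1 - (u/ε)^2 = (v/ε)^2 by linarith]
      rw [Real.sqrt_sq (by positivity)]
      field_simp
  · refine ⟨-Real.arccos (u/ε), ?_, ?_⟩
    · rw [Real.cos_neg, Real.cos_arccos hc1 hc2]; field_simp
    · rw [Real.sin_neg, Real.sin_arccos]
      rw [show 1 - (u/ε)^2 = (v/ε)^2 by linarith]
      have hvε : v / ε ≤ 0 := by rw [div_nonpos_iff]; right; exact ⟨hv.le, hε.le⟩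
      rw [Real.sqrt_sq_eq_abs, abs_of_nonpos hvε]
      field_simp

lemma phi_cont (ε : ℝ) (hε : 0 < ε) (hε' : ε ≤ 1/10) :
    Continuous (fun θ : ℝ => gam ε (ε*Real.cos θ) (ε*Real.sin θ)) := by
  have hu : Continuous (fun θ : ℝ => ε*Real.cos θ) := continuous_const.mul Real.continuous_cos
  have hv : Continuous (fun θ : ℝ => ε*Real.sin θ) := continuous_const.mul Real.continuous_sin
  have hs : Continuous (fun θ : ℝ => sx ε (ε*Real.cos θ)) := by
    unfold sx
    exact ((hu.neg.add ((((hu.pow 2).add continuous_const).sub continuous_const).sqrt)).div_const 2)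
  have ht : Continuous (fun θ : ℝ => tx ε (ε*Real.cos θ)) := by
    unfold tx
    exact ((continuous_const.sub (hs.pow 2)).sqrt)
  have hnum : Continuous (fun θ : ℝ => 8 * tx ε (ε*Real.cos θ) * (sx ε (ε*Real.cos θ) + ε*Real.cos θ) *
      (2 * sx ε (ε*Real.cos θ) * tx ε (ε*Real.cos θ) + tx ε (ε*Real.cos θ) * (ε*Real.cos θ) -
        sx ε (ε*Real.cos θ) * (ε*Real.sin θ))) :=
    ((continuous_const.mul ht).mul (hs.add hu)).mul
      ((((continuous_const.mul hs).mul ht).add (ht.mul hu)).sub (hs.mul hv))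
  have hden : Continuous (fun θ : ℝ => (ε*Real.sin θ - tx ε (ε*Real.cos θ))^2 +
      (sx ε (ε*Real.cos θ) + ε*Real.cos θ)^2) :=
    ((hv.sub ht).pow 2).add ((hs.add hu).pow 2)
  have hden0 : ∀ θ : ℝ, (ε*Real.sin θ - tx ε (ε*Real.cos θ))^2 +
      (sx ε (ε*Real.cos θ) + ε*Real.cos θ)^2 ≠ 0 := by
    intro θ
    have := (main_bounds ε (ε*Real.cos θ) (ε*Real.sin θ) hε hε'
      (by rw [mul_pow, mul_pow, ← mul_add, Real.cos_sq_add_sin_sq, mul_one])).1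
    intro h0; rw [h0] at this; norm_num at this
  have : Continuous (fun θ : ℝ => g2 ε (ε*Real.cos θ) (ε*Real.sin θ)) := by
    unfold g2
    exact continuous_const.add (hnum.div hden hden0)
  exact this.sqrt
lemma dist_sq (a b : EuclideanSpace ℝ (Fin 2)) :
    (a 0 - b 0)^2 + (a 1 - b 1)^2 = dist a b ^ 2 := by
  rw [EuclideanSpace.dist_eq, Fin.sum_univ_two, Real.sq_sqrt (by positivity)]
  simp [Real.dist_eq, sq_abs]

lemma S_eq (ε : ℝ) (hε : 0 < ε) (hε' : ε ≤ 1/10) :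
    K33GammaSet ε 1 1 1 1 (Real.sqrt 2) 1 (Real.sqrt 2)
      = {1} ∪ Set.range (fun θ : ℝ => gam ε (ε*Real.cos θ) (ε*Real.sin θ)) := by
  ext γ
  constructor
  · rintro ⟨hγ0, p, h05, h01, h12, h23, h34, h45, h03, h25, h14⟩
    have d05 : (p 0 0 - p 5 0)^2 + (p 0 1 - p 5 1)^2 = ε^2 := by rw [dist_sq, h05]
    have d01 : (p 0 0 - p 1 0)^2 + (p 0 1 - p 1 1)^2 = 1 := by rw [dist_sq, h01]; norm_num
    have d12 : (p 1 0 - p 2 0)^2 + (p 1 1 - p 2 1)^2 = 1 := by rw [dist_sq, h12]; norm_num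
    have d23 : (p 2 0 - p 3 0)^2 + (p 2 1 - p 3 1)^2 = 1 := by rw [dist_sq, h23]; norm_num
    have d34 : (p 3 0 - p 4 0)^2 + (p 3 1 - p 4 1)^2 = 1 := by rw [dist_sq, h34]; norm_num
    have d45 : (p 4 0 - p 5 0)^2 + (p 4 1 - p 5 1)^2 = 2 := by
      rw [dist_sq, h45, Real.sq_sqrt]; norm_num
    have d03 : (p 0 0 - p 3 0)^2 + (p 0 1 - p 3 1)^2 = 1 := by rw [dist_sq, h03]; norm_num
    have d25 : (p 2 0 - p 5 0)^2 + (p 2 1 - p 5 1)^2 = 2 := by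
      rw [dist_sq, h25, Real.sq_sqrt]; norm_num
    have d14 : (p 1 0 - p 4 0)^2 + (p 1 1 - p 4 1)^2 = γ^2 := by rw [dist_sq, h14]
    rcases complete ε γ hε hε' hγ0 (p 0 0) (p 0 1) (p 1 0) (p 1 1) (p 2 0) (p 2 1)
      (p 3 0) (p 3 1) (p 4 0) (p 4 1) (p 5 0) (p 5 1)
      d05 d01 d12 d23 d34 d45 d03 d25 d14 with h | ⟨u, v, huv, hg⟩
    · exact Or.inl h
    · right
      obtain ⟨θ, hu, hv⟩ := circle_param ε u v hε huv
      refine ⟨θ, ?_⟩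
      show gam ε (ε*Real.cos θ) (ε*Real.sin θ) = γ
      rw [← hu, ← hv]
      unfold gam
      rw [← hg, Real.sqrt_sq hγ0]
  · rintro (h1 | ⟨θ, rfl⟩)
    · rw [Set.mem_singleton_iff] at h1
      subst h1
      exact realize ε ε 0 hε hε' (by ring) 1 (Or.inl rfl)
    · exact realize ε (ε*Real.cos θ) (ε*Real.sin θ) hε hε'
        (by rw [mul_pow, mul_pow, ← mul_add, Real.cos_sq_add_sin_sq, mul_one]) _ (Or.inr rfl)

lemma gam_bounds (ε u v : ℝ) (hε : 0 < ε) (hε' : ε ≤ 1/10) (huv : u^2+v^2 = ε^2) :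
    7/5 ≤ gam ε u v ∧ gam ε u v ≤ 4 := by
  obtain ⟨_, hg1, hg2⟩ := main_bounds ε u v hε hε' huv
  unfold gam
  constructor
  · rw [show (7:ℝ)/5 = Real.sqrt ((7/5)^2) by rw [Real.sqrt_sq]; norm_num]
    apply Real.sqrt_le_sqrt; nlinarith
  · rw [show (4:ℝ) = Real.sqrt (4^2) by rw [Real.sqrt_sq] <;> norm_num]
    apply Real.sqrt_le_sqrt; nlinarith

lemma sqrt5_mem (ε : ℝ) (hε : 0 < ε) (hε' : ε ≤ 1/10) :
    Real.sqrt 5 ∈ Set.range (fun θ : ℝ => gam ε (ε*Real.cos θ) (ε*Real.sin θ)) := by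
  have hcont := phi_cont ε hε hε'
  have e0 : gam ε (ε*Real.cos 0) (ε*Real.sin 0) = gam ε ε 0 := by
    rw [Real.cos_zero, Real.sin_zero, mul_one, mul_zero]
  have eπ : gam ε (ε*Real.cos Real.pi) (ε*Real.sin Real.pi) = gam ε (-ε) 0 := by
    rw [Real.cos_pi, Real.sin_pi, mul_zero]
    norm_num
  have h0 : Real.sqrt 5 ≤ gam ε (ε*Real.cos 0) (ε*Real.sin 0) := by
    rw [e0]; exact Real.sqrt_le_sqrt (end1 ε hε hε')
  have hπ : gam ε (ε*Real.cos Real.pi) (ε*Real.sin Real.pi) ≤ Real.sqrt 5 := by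
    rw [eπ]; exact Real.sqrt_le_sqrt (end2 ε hε hε')
  have hIcc := intermediate_value_Icc' (le_of_lt Real.pi_pos) hcont.continuousOn
  obtain ⟨θ, _, hθ⟩ := hIcc ⟨hπ, h0⟩
  exact ⟨θ, hθ⟩

theorem two_components_aux :
    ∃ ε₀ > (0 : ℝ), ∀ ε : ℝ, 0 < ε → ε < ε₀ →
      Nat.card (ConnectedComponents
        (K33GammaSet ε 1 1 1 1 (Real.sqrt 2) 1 (Real.sqrt 2))) = 2 ∧
      (1 : ℝ) ∈ K33GammaSet ε 1 1 1 1 (Real.sqrt 2) 1 (Real.sqrt 2) ∧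
      Real.sqrt 5 ∈ K33GammaSet ε 1 1 1 1 (Real.sqrt 2) 1 (Real.sqrt 2) ∧
      connectedComponentIn
          (K33GammaSet ε 1 1 1 1 (Real.sqrt 2) 1 (Real.sqrt 2)) 1 ≠
        connectedComponentIn
          (K33GammaSet ε 1 1 1 1 (Real.sqrt 2) 1 (Real.sqrt 2))
          (Real.sqrt 5) := by
  refine ⟨1/10, by norm_num, fun ε hε hε10 => ?_⟩
  have hε' : ε ≤ 1/10 := le_of_lt hε10
  set S := K33GammaSet ε 1 1 1 1 (Real.sqrt 2) 1 (Real.sqrt 2) with hSdef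
  set Γ := Set.range (fun θ : ℝ => gam ε (ε*Real.cos θ) (ε*Real.sin θ)) with hΓdef
  have hSeq : S = {1} ∪ Γ := S_eq ε hε hε'
  have hΓS : Γ ⊆ S := by rw [hSeq]; exact Set.subset_union_right
  have hΓconn : IsPreconnected Γ := by
    rw [hΓdef, ← Set.image_univ]
    exact isPreconnected_univ.image _ (phi_cont ε hε hε').continuousOn
  have hΓlow : ∀ x ∈ Γ, 7/5 ≤ x := by
    rintro x ⟨θ, rfl⟩
    exact (gam_bounds ε (ε*Real.cos θ) (ε*Real.sin θ) hε hε'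
      (by rw [mul_pow, mul_pow, ← mul_add, Real.cos_sq_add_sin_sq, mul_one])).1
  have h5Γ : Real.sqrt 5 ∈ Γ := sqrt5_mem ε hε hε'
  have h1S : (1:ℝ) ∈ S := by rw [hSeq]; exact Or.inl rfl
  have h5S : Real.sqrt 5 ∈ S := hΓS h5Γ
  have h52 : (2:ℝ) ≤ Real.sqrt 5 := by
    rw [show (2:ℝ) = Real.sqrt 4 by rw [show (4:ℝ) = 2^2 by norm_num, Real.sqrt_sq] <;> norm_num]
    exact Real.sqrt_le_sqrt (by norm_num)
  have hne : connectedComponentIn S 1 ≠ connectedComponentIn S (Real.sqrt 5) := by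
    intro heq
    have h1mem : (1:ℝ) ∈ connectedComponentIn S (Real.sqrt 5) :=
      heq ▸ mem_connectedComponentIn h1S
    have h5mem : Real.sqrt 5 ∈ connectedComponentIn S (Real.sqrt 5) :=
      mem_connectedComponentIn h5S
    have hsub : Set.Icc (1:ℝ) (Real.sqrt 5) ⊆ connectedComponentIn S (Real.sqrt 5) :=
      (isPreconnected_connectedComponentIn).Icc_subset h1mem h5mem
    have h65 : (6/5:ℝ) ∈ connectedComponentIn S (Real.sqrt 5) :=
      hsub ⟨by norm_num, by linarith⟩
    have h65S : (6/5:ℝ) ∈ S := connectedComponentIn_subset _ _ h65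
    rw [hSeq] at h65S
    rcases h65S with h | h
    · rw [Set.mem_singleton_iff] at h; norm_num at h
    · have := hΓlow _ h; norm_num at this
  refine ⟨?_, h1S, h5S, hne⟩
  rw [Nat.card_eq_two_iff]
  refine ⟨ConnectedComponents.mk ⟨1, h1S⟩, ConnectedComponents.mk ⟨Real.sqrt 5, h5S⟩, ?_, ?_⟩
  · intro h
    apply hne
    rw [ConnectedComponents.coe_eq_coe] at h
    rw [connectedComponentIn_eq_image h1S, connectedComponentIn_eq_image h5S, h]
  · apply Set.eq_univ_of_forall
    intro c
    obtain ⟨⟨z, hz⟩, rfl⟩ := ConnectedComponents.surjective_coe c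
    have hz' := hz
    rw [hSeq] at hz'
    rcases hz' with h1 | hΓ
    · rw [Set.mem_singleton_iff] at h1
      left
      show ConnectedComponents.mk _ = ConnectedComponents.mk _
      congr 1
      exact Subtype.ext h1
    · right
      show ConnectedComponents.mk _ = ConnectedComponents.mk _
      rw [ConnectedComponents.coe_eq_coe]
      have hccIn : connectedComponentIn S z = connectedComponentIn S (Real.sqrt 5) := by
        apply connectedComponentIn_eq
        exact hΓconn.subset_connectedComponentIn hΓ hΓS h5Γ
      have himg := hccIn
      rw [connectedComponentIn_eq_image hz, connectedComponentIn_eq_image h5S] at himg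
      exact Subtype.val_injective.image_injective himg


/-- **Example: two disjoint intervals of admissible `γ`.** For all sufficiently
small `ε > 0`, with lengths `a = ε`, `b = c = d = e = α = 1`, `f = β = √2`, the
set of values `γ ≥ 0` for which `(K_{3,3}, l)` is realizable has exactly two
connected components, one containing `1` and one containing `√5`. -/
theorem K33_gamma_set_two_components :
    ∃ ε₀ > (0 : ℝ), ∀ ε : ℝ, 0 < ε → ε < ε₀ →
      Nat.card (ConnectedComponents
        (K33GammaSet ε 1 1 1 1 (Real.sqrt 2) 1 (Real.sqrt 2))) = 2 ∧
      (1 : ℝ) ∈ K33GammaSet ε 1 1 1 1 (Real.sqrt 2) 1 (Real.sqrt 2) ∧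
      Real.sqrt 5 ∈ K33GammaSet ε 1 1 1 1 (Real.sqrt 2) 1 (Real.sqrt 2) ∧
      connectedComponentIn
          (K33GammaSet ε 1 1 1 1 (Real.sqrt 2) 1 (Real.sqrt 2)) 1 ≠
        connectedComponentIn
          (K33GammaSet ε 1 1 1 1 (Real.sqrt 2) 1 (Real.sqrt 2))
          (Real.sqrt 5) := by
  exact two_components_aux
end
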